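/- arXiv:2310.03206 — 7 statements merged into one kernel-verified Lean document; each statement's English description precedes it below -/
import Mathlib

section
/- Let K be (κ,γ)-strongly stable (with κ ≥ 1) for the linear system (A₁, B₁), and let A₂, B₂ be matrices with ‖A₁ − A₂‖ ≤ ε and ‖B₁ − B₂‖ ≤ ε, where ε < γ/(2κ³). Then K is (κ, γ − 2κ³ε)-strongly stable for the linear system (A₂, B₂). -/
/- Common setup: spectral norm on matrices, Euclidean vectors, strong stability,
disturbance-state transfer matrices and surrogate states/actions from the paper
"Distributed Online Control over Networks of LTI systems". -/

open scoped Matrix.Norms.L2Operator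

/-- `d₂ × d₁` real matrices, equipped (via the open scoped instance) with the
spectral (L2 operator) norm. -/
abbrev Mat (p q : ℕ) := Matrix (Fin p) (Fin q) ℝ

/-- Euclidean vectors. -/
abbrev Vec (d : ℕ) := EuclideanSpace ℝ (Fin d)

/-- Matrix-vector multiplication as a map between Euclidean spaces. -/
noncomputable def mulV {m n : Type*} [Fintype m] [Fintype n] (A : Matrix m n ℝ)
    (x : EuclideanSpace ℝ n) : EuclideanSpace ℝ m :=
  (WithLp.equiv 2 _).symm (A.mulVec ((WithLp.equiv 2 _) x))

/-- `K` is `(κ, γ)`-strongly stable for the system `(A, B)`. -/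
noncomputable def StronglyStable {d₁ d₂ : ℕ} (κ γ : ℝ) (A : Mat d₁ d₁)
    (B : Mat d₁ d₂) (K : Mat d₂ d₁) : Prop :=
  ‖K‖ ≤ κ ∧ ∃ H L : Mat d₁ d₁,
    IsUnit H ∧ A - B * K = H * L * H⁻¹ ∧ ‖L‖ ≤ 1 - γ ∧ ‖H‖ ≤ κ ∧ ‖H⁻¹‖ ≤ κ

/-- The disturbance-state transfer matrix `Ψ^{K,h}_{t,i}(M_{t−h:t} | A, B)`,
where `M s i` denotes `M_s^{[i]}`. -/
noncomputable def Psi {d₁ d₂ : ℕ} (H : ℕ) (A : Mat d₁ d₁) (B : Mat d₁ d₂) (K : Mat d₂ d₁)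
    (M : ℕ → ℕ → Mat d₂ d₁) (t h i : ℕ) : Mat d₁ d₁ :=
  (if i ≤ h then (A - B * K) ^ i else 0) +
    ∑ j ∈ Finset.range (h + 1),
      if j < i ∧ i - j ≤ H then (A - B * K) ^ j * B * M (t - j) (i - j - 1) else 0

/-- The surrogate state `y^K_{t+1}(M_{t−H:t} | A, B, {w})`. -/
noncomputable def ySurr {d₁ d₂ : ℕ} (H : ℕ) (A : Mat d₁ d₁) (B : Mat d₁ d₂) (K : Mat d₂ d₁)
    (M : ℕ → ℕ → Mat d₂ d₁) (w : ℤ → Vec d₁) (t : ℕ) : Vec d₁ :=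
  ∑ i ∈ Finset.range (2 * H + 1), mulV (Psi H A B K M t H i) (w ((t : ℤ) - i))

/-- The surrogate action `v^K_{t+1}(M_{t−H:t} | A, B, {w})`. -/
noncomputable def vSurr {d₁ d₂ : ℕ} (H : ℕ) (A : Mat d₁ d₁) (B : Mat d₁ d₂) (K : Mat d₂ d₁)
    (M : ℕ → ℕ → Mat d₂ d₁) (w : ℤ → Vec d₁) (t : ℕ) : Vec d₂ :=
  -mulV K (ySurr H A B K M w t) + ∑ i ∈ Finset.range H, mulV (M (t + 1) i) (w ((t : ℤ) - i))

/-- State-action pairs with the L2 (Euclidean) product norm. -/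
abbrev XU (d₁ d₂ : ℕ) := WithLp 2 (Vec d₁ × Vec d₂)

/-- Bundling a state and an action into an L2 state-action pair. -/
noncomputable def pairXU {d₁ d₂ : ℕ} (x : Vec d₁) (u : Vec d₂) : XU d₁ d₂ :=
  (WithLp.equiv 2 _).symm (x, u)

/-- The Euclidean space of parameter tuples `M = (M^{[0]}, …, M^{[H−1]})`;
its norm is the Frobenius norm of the tuple. -/
abbrev MTup (Hn d₁ d₂ : ℕ) := EuclideanSpace ℝ (Fin Hn × Fin d₂ × Fin d₁)

/-- The `i`-th matrix component `M^{[i]}` of a parameter tuple. -/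
noncomputable def toMat {Hn d₁ d₂ : ℕ} (M : MTup Hn d₁ d₂) (i : ℕ) : Mat d₂ d₁ :=
  fun a b => if h : i < Hn then M (⟨i, h⟩, a, b) else 0

/-- a `(κ,γ)`-strongly stable policy for `(A₁,B₁)` is
`(κ, γ − 2κ³ε)`-strongly stable for any `ε`-close system `(A₂,B₂)`. -/
theorem strongly_stable_of_close_system {d₁ d₂ : ℕ} (κ γ ε : ℝ)
    (hκ : 1 ≤ κ) (hγ0 : 0 < γ) (hγ1 : γ ≤ 1)
    (A₁ A₂ : Mat d₁ d₁) (B₁ B₂ : Mat d₁ d₂) (K : Mat d₂ d₁)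
    (hss : StronglyStable κ γ A₁ B₁ K)
    (hA : ‖A₁ - A₂‖ ≤ ε) (hB : ‖B₁ - B₂‖ ≤ ε)
    (hε : ε < γ / (2 * κ ^ 3)) :
    StronglyStable κ (γ - 2 * κ ^ 3 * ε) A₂ B₂ K := by
  obtain ⟨hK, H, L, hH, hfac, hL, hHn, hHin⟩ := hss
  have hdet : IsUnit H.det := (Matrix.isUnit_iff_isUnit_det H).mp hH
  have h1 : H * H⁻¹ = 1 := Matrix.mul_nonsing_inv H hdet
  have hε0 : 0 ≤ ε := le_trans (norm_nonneg _) hA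
  have hκ0 : (0:ℝ) < κ := lt_of_lt_of_le one_pos hκ
  set Δ : Mat d₁ d₁ := (A₂ - A₁) - (B₂ - B₁) * K with hΔ
  refine ⟨hK, H, L + H⁻¹ * Δ * H, hH, ?_, ?_, hHn, hHin⟩
  · have hsplit : A₂ - B₂ * K = (A₁ - B₁ * K) + Δ := by
      rw [hΔ, Matrix.sub_mul]; abel
    calc A₂ - B₂ * K = (A₁ - B₁ * K) + Δ := hsplit
      _ = H * L * H⁻¹ + H * H⁻¹ * Δ * (H * H⁻¹) := by rw [hfac, h1]; simp
      _ = H * (L + H⁻¹ * Δ * H) * H⁻¹ := by noncomm_ring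
  · have hΔn : ‖Δ‖ ≤ ε + ε * κ := by
      calc ‖Δ‖ ≤ ‖A₂ - A₁‖ + ‖(B₂ - B₁) * K‖ := norm_sub_le _ _
        _ ≤ ε + ε * κ := by
            have h3 : ‖A₂ - A₁‖ ≤ ε := by rwa [norm_sub_rev]
            have h4 : ‖(B₂ - B₁) * K‖ ≤ ‖B₂ - B₁‖ * ‖K‖ := Matrix.l2_opNorm_mul _ _
            have h5 : ‖B₂ - B₁‖ ≤ ε := by rwa [norm_sub_rev]
            have h6 : ‖B₂ - B₁‖ * ‖K‖ ≤ ε * κ :=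
              mul_le_mul h5 hK (norm_nonneg _) hε0
            linarith
    have key : ‖H⁻¹ * Δ * H‖ ≤ κ * (ε + ε * κ) * κ := by
      calc ‖H⁻¹ * Δ * H‖ ≤ ‖H⁻¹ * Δ‖ * ‖H‖ := Matrix.l2_opNorm_mul _ _
        _ ≤ ‖H⁻¹‖ * ‖Δ‖ * ‖H‖ :=
            mul_le_mul_of_nonneg_right (Matrix.l2_opNorm_mul _ _) (norm_nonneg _)
        _ ≤ κ * (ε + ε * κ) * κ := by
            have : 0 ≤ ε + ε * κ := by positivity
            apply mul_le_mul _ hHn (norm_nonneg _) (by positivity)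
            exact mul_le_mul hHin hΔn (norm_nonneg _) (le_of_lt hκ0)
    calc ‖L + H⁻¹ * Δ * H‖ ≤ ‖L‖ + ‖H⁻¹ * Δ * H‖ := norm_add_le _ _
      _ ≤ (1 - γ) + κ * (ε + ε * κ) * κ := add_le_add hL key
      _ ≤ 1 - (γ - 2 * κ ^ 3 * ε) := by nlinarith [mul_nonneg (mul_nonneg hε0 (mul_pos hκ0 hκ0).le) (sub_nonneg.mpr hκ)]
end

section
/- Let M and ΔM be real n×n matrices such that ‖M‖ ≤ 1−γ and ‖M + ΔM‖ ≤ 1−γ for some 0 < γ < 1, where ‖·‖ is the spectral norm. Then the series Σ_{t=0}^{∞} ‖(M + ΔM)^t − M^t‖ converges and Σ_{t=0}^{∞} ‖(M + ΔM)^t − M^t‖ ≤ γ^{−2} ‖ΔM‖. -/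
/- Common setup: spectral norm on matrices, Euclidean vectors, strong stability,
disturbance-state transfer matrices and surrogate states/actions from the paper
"Distributed Online Control over Networks of LTI systems". -/

open scoped Matrix.Norms.L2Operator

/-- the series `Σ_t ‖(M + ΔM)^t − M^t‖` converges and is at most
`γ⁻² ‖ΔM‖`. -/
theorem power_difference_series_bound {n : ℕ} (γ : ℝ) (hγ0 : 0 < γ) (hγ1 : γ < 1)
    (M ΔM : Mat n n) (hM : ‖M‖ ≤ 1 - γ) (hMΔ : ‖M + ΔM‖ ≤ 1 - γ) :
    Summable (fun t : ℕ => ‖(M + ΔM) ^ t - M ^ t‖) ∧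
      ∑' t : ℕ, ‖(M + ΔM) ^ t - M ^ t‖ ≤ (γ ^ 2)⁻¹ * ‖ΔM‖ := by

  set r := 1 - γ with hr
  have hr0 : 0 < r := by simp [hr]; linarith
  have hr1 : r < 1 := by simp [hr]; linarith
  have hΔ0 : (0:ℝ) ≤ ‖ΔM‖ := norm_nonneg _
  -- key pointwise bound
  have key : ∀ t : ℕ, ‖(M + ΔM) ^ t - M ^ t‖ ≤ ‖ΔM‖ * r⁻¹ * ((t : ℝ) * r ^ t) := by
    intro t
    induction t with
    | zero => simp
    | succ t ih =>
      have hsplit : (M + ΔM) ^ (t + 1) - M ^ (t + 1)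
          = (M + ΔM) * ((M + ΔM) ^ t - M ^ t) + ΔM * M ^ t := by
        simp only [pow_succ']
        noncomm_ring
      calc ‖(M + ΔM) ^ (t + 1) - M ^ (t + 1)‖
          ≤ ‖(M + ΔM) * ((M + ΔM) ^ t - M ^ t)‖ + ‖ΔM * M ^ t‖ := by
            rw [hsplit]; exact norm_add_le _ _
        _ ≤ ‖M + ΔM‖ * ‖(M + ΔM) ^ t - M ^ t‖ + ‖ΔM‖ * ‖M ^ t‖ := by
            gcongr <;> exact norm_mul_le _ _
        _ ≤ r * (‖ΔM‖ * r⁻¹ * ((t : ℝ) * r ^ t)) + ‖ΔM‖ * r ^ t := by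
            have h2 : ‖M ^ t‖ ≤ r ^ t := by
              rcases Nat.eq_zero_or_pos t with h | h
              · subst h
                have h1 := Matrix.l2_opNorm_conjTranspose_mul_self (1 : Mat n n)
                simp only [Matrix.conjTranspose_one, one_mul] at h1
                have h0 := norm_nonneg (1 : Mat n n)
                simp only [pow_zero]
                nlinarith
              · exact le_trans (norm_pow_le' _ h)
                  (pow_le_pow_left₀ (norm_nonneg _) hM t)
            exact add_le_add (mul_le_mul hMΔ ih (norm_nonneg _) hr0.le)
              (mul_le_mul_of_nonneg_left h2 hΔ0)
        _ = ‖ΔM‖ * r⁻¹ * ((t + 1 : ℝ) * r ^ (t + 1)) := by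
            field_simp
            ring
        _ = ‖ΔM‖ * r⁻¹ * (((t + 1 : ℕ) : ℝ) * r ^ (t + 1)) := by push_cast; ring
  have hrn : ‖r‖ < 1 := by rw [Real.norm_eq_abs, abs_of_pos hr0]; exact hr1
  have hsum : Summable (fun t : ℕ => ‖ΔM‖ * r⁻¹ * ((t : ℝ) * r ^ t)) :=
    ((summable_pow_mul_geometric_of_norm_lt_one 1 hrn).congr
      (by intro t; simp)).mul_left _
  have hS : Summable (fun t : ℕ => ‖(M + ΔM) ^ t - M ^ t‖) :=
    Summable.of_nonneg_of_le (fun t => norm_nonneg _) key hsum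
  refine ⟨hS, ?_⟩
  have htsum : ∑' t : ℕ, ‖ΔM‖ * r⁻¹ * ((t : ℝ) * r ^ t) = (γ ^ 2)⁻¹ * ‖ΔM‖ := by
    rw [tsum_mul_left, tsum_coe_mul_geometric_of_norm_lt_one hrn]
    have : (1 : ℝ) - r = γ := by simp [hr]
    rw [this]
    field_simp
  calc ∑' t : ℕ, ‖(M + ΔM) ^ t - M ^ t‖
      ≤ ∑' t : ℕ, ‖ΔM‖ * r⁻¹ * ((t : ℝ) * r ^ t) := Summable.tsum_le_tsum key hS hsum
    _ = (γ ^ 2)⁻¹ * ‖ΔM‖ := htsum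
end

section
/- Let K be (κ′,γ′)-strongly stable for the system (A′, B′) with ‖B′‖ ≤ κ_{B′}, and let {M_s} be a sequence of parameter tuples with ‖M_s^{[i]}‖ ≤ C(1−γ)^i for all s and 0 ≤ i ≤ H−1, where γ ≥ γ′. Then for all t, all 0 ≤ h ≤ t and all 0 ≤ i ≤ H + h, the disturbance-state transfer matrix satisfies ‖Ψ^{K,h}_{t,i}(M_{t−h:t}|A′,B′)‖ ≤ (κ′)²(1−γ′)^i·1_{i≤h} + H κ_{B′}(κ′)² C (1−γ′)^{i−1}. -/
/- Common setup: spectral norm on matrices, Euclidean vectors, strong stability,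
disturbance-state transfer matrices and surrogate states/actions from the paper
"Distributed Online Control over Networks of LTI systems". -/

open scoped Matrix.Norms.L2Operator

/-- norm bound on the disturbance-state transfer matrix. -/
theorem psi_norm_bound {d₁ d₂ : ℕ} (κ' γ' γ C κB' : ℝ) (Hn : ℕ) (hH : 1 ≤ Hn)
    (hκ' : 1 ≤ κ') (hγ'0 : 0 < γ') (hγ'1 : γ' ≤ 1) (hγγ' : γ' ≤ γ)
    (A' : Mat d₁ d₁) (B' : Mat d₁ d₂) (K : Mat d₂ d₁)
    (hss : StronglyStable κ' γ' A' B' K) (hB' : ‖B'‖ ≤ κB')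
    (M : ℕ → ℕ → Mat d₂ d₁)
    (hM : ∀ s i, i < Hn → ‖M s i‖ ≤ C * (1 - γ) ^ i)
    (t h i : ℕ) (hh : h ≤ t) (hi : i ≤ Hn + h) :
    ‖Psi Hn A' B' K M t h i‖ ≤
      (if i ≤ h then κ' ^ 2 * (1 - γ') ^ i else 0) +
        Hn * κB' * κ' ^ 2 * C * (1 - γ') ^ (i - 1) := by
    classical
  obtain ⟨hK, Hm, L, hHu, hEq, hL, hHnorm, hHinv⟩ := hss
  have hdet : IsUnit Hm.det := (Matrix.isUnit_iff_isUnit_det Hm).mp hHu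
  have hHH : Hm * Hm⁻¹ = 1 := Matrix.mul_nonsing_inv _ hdet
  have hHH' : Hm⁻¹ * Hm = 1 := Matrix.nonsing_inv_mul _ hdet
  have hγ'le : (0:ℝ) ≤ 1 - γ' := by linarith
  have hκ'0 : (0:ℝ) ≤ κ' := by linarith
  have hC0 : 0 ≤ C := le_trans (norm_nonneg _) (by simpa using hM 0 0 hH)
  have hκB0 : 0 ≤ κB' := le_trans (norm_nonneg _) hB'
  -- powers of the closed-loop matrix
  have hpow : ∀ j : ℕ, (A' - B' * K) ^ j = Hm * L ^ j * Hm⁻¹ := by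
    intro j
    induction j with
    | zero => simp [hHH]
    | succ j ih =>
      rw [pow_succ, ih, hEq, pow_succ]
      calc Hm * L ^ j * Hm⁻¹ * (Hm * L * Hm⁻¹)
          = Hm * L ^ j * (Hm⁻¹ * Hm) * L * Hm⁻¹ := by noncomm_ring
        _ = Hm * (L ^ j * L) * Hm⁻¹ := by rw [hHH']; noncomm_ring
  have hLpow : ∀ j : ℕ, ‖L ^ j‖ ≤ (1 - γ') ^ j := by
    intro j
    induction j with
    | zero =>
      have hone : ‖(1 : Mat d₁ d₁)‖ ≤ 1 := by
        rw [Matrix.cstar_norm_def, map_one, ContinuousLinearMap.one_def]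
        exact ContinuousLinearMap.norm_id_le
      simpa using hone
    | succ j ih =>
      rw [pow_succ, pow_succ]
      exact (Matrix.l2_opNorm_mul _ _).trans
        (mul_le_mul ih hL (norm_nonneg _) (pow_nonneg hγ'le _))
  have hP : ∀ j : ℕ, ‖(A' - B' * K) ^ j‖ ≤ κ' ^ 2 * (1 - γ') ^ j := by
    intro j
    rw [hpow j]
    calc ‖Hm * L ^ j * Hm⁻¹‖ ≤ ‖Hm * L ^ j‖ * ‖Hm⁻¹‖ := Matrix.l2_opNorm_mul _ _
      _ ≤ ‖Hm‖ * ‖L ^ j‖ * ‖Hm⁻¹‖ :=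
          mul_le_mul_of_nonneg_right (Matrix.l2_opNorm_mul _ _) (norm_nonneg _)
      _ ≤ κ' * (1 - γ') ^ j * κ' := by
          apply mul_le_mul _ hHinv (norm_nonneg _) (by positivity)
          exact mul_le_mul hHnorm (hLpow j) (norm_nonneg _) hκ'0
      _ = κ' ^ 2 * (1 - γ') ^ j := by ring
  -- norm bound on M with γ' instead of γ
  have hMs : ∀ s k, k < Hn → ‖M s k‖ ≤ C * (1 - γ') ^ k := by
    intro s k hk
    rcases le_or_gt 0 (1 - γ) with hγle | hγlt
    · exact (hM s k hk).trans (mul_le_mul_of_nonneg_left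
        (pow_le_pow_left₀ hγle (by linarith) k) hC0)
    · rcases Nat.eq_zero_or_pos k with rfl | hk1
      · simpa using hM s 0 hH
      · -- 1 - γ < 0 and 1 ≤ k < Hn forces C = 0
        have h1 := hM s 1 (lt_of_le_of_lt hk1 hk)
        have hC : C ≤ 0 := by nlinarith [norm_nonneg (M s 1)]
        have hCeq : C = 0 := le_antisymm hC hC0
        have := hM s k hk
        rw [hCeq] at this ⊢
        simpa using this
  set D : ℝ := κB' * (κ' ^ 2 * C * (1 - γ') ^ (i - 1)) with hD
  have hD0 : 0 ≤ D := by positivity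
  unfold Psi
  refine le_trans (norm_add_le _ _) (add_le_add ?_ ?_)
  · split_ifs with hcase
    · exact hP i
    · simp
  · calc ‖∑ j ∈ Finset.range (h + 1), if j < i ∧ i - j ≤ Hn then
          (A' - B' * K) ^ j * B' * M (t - j) (i - j - 1) else 0‖
        ≤ ∑ j ∈ Finset.range (h + 1), ‖if j < i ∧ i - j ≤ Hn then
          (A' - B' * K) ^ j * B' * M (t - j) (i - j - 1) else 0‖ := norm_sum_le _ _
      _ ≤ ∑ j ∈ Finset.range (h + 1), if j < i ∧ i - j ≤ Hn then D else 0 := by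
          apply Finset.sum_le_sum
          intro j hj
          split_ifs with hcond
          · obtain ⟨hji, hijH⟩ := hcond
            have hkH : i - j - 1 < Hn := by omega
            have hjk : j + (i - j - 1) = i - 1 := by omega
            calc ‖(A' - B' * K) ^ j * B' * M (t - j) (i - j - 1)‖
                ≤ ‖(A' - B' * K) ^ j * B'‖ * ‖M (t - j) (i - j - 1)‖ :=
                  Matrix.l2_opNorm_mul _ _
              _ ≤ ‖(A' - B' * K) ^ j‖ * ‖B'‖ * ‖M (t - j) (i - j - 1)‖ :=
                  mul_le_mul_of_nonneg_right (Matrix.l2_opNorm_mul _ _) (norm_nonneg _)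
              _ ≤ (κ' ^ 2 * (1 - γ') ^ j) * κB' * (C * (1 - γ') ^ (i - j - 1)) := by
                  apply mul_le_mul _ (hMs _ _ hkH) (norm_nonneg _) (by positivity)
                  exact mul_le_mul (hP j) hB' (norm_nonneg _) (by positivity)
              _ = D := by rw [hD, ← hjk, pow_add]; ring
          · simp
      _ = ((Finset.range (h + 1)).filter (fun j => j < i ∧ i - j ≤ Hn)).card • D := by
          rw [← Finset.sum_filter, Finset.sum_const]
      _ ≤ Hn * D := by
          rw [nsmul_eq_mul]
          apply mul_le_mul_of_nonneg_right _ hD0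
          have hsub : (Finset.range (h + 1)).filter (fun j => j < i ∧ i - j ≤ Hn)
              ⊆ Finset.Ico (i - Hn) i := by
            intro j hj
            simp only [Finset.mem_filter, Finset.mem_range, Finset.mem_Ico] at hj ⊢
            omega
          have := Finset.card_le_card hsub
          rw [Nat.card_Ico] at this
          have : ((Finset.range (h + 1)).filter (fun j => j < i ∧ i - j ≤ Hn)).card ≤ Hn := by
            omega
          exact_mod_cast this
      _ = Hn * κB' * κ' ^ 2 * C * (1 - γ') ^ (i - 1) := by rw [hD]; ring
end

section
/- Let A ∈ ℝ^{d₁×d₁}, B ∈ ℝ^{d₁×d₂}, and K, K* ∈ ℝ^{d₂×d₁}. Then for every integer i ≥ 1, (A − BK)^i + Σ_{j=0}^{i−1} (A − BK)^j B (K − K*) (A − BK*)^{i−j−1} = (A − BK*)^i. Consequently, defining M*^{[l]} := (K − K*)(A − BK*)^l for 0 ≤ l ≤ H−1 and applying the time-invariant tuple M* in the disturbance-state transfer matrix, Ψ^{K,t−1}_{t,i}(M*, …, M* | A, B) = (A − BK*)^i for every 0 ≤ i ≤ min(H, t−1). -/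
/- Common setup: spectral norm on matrices, Euclidean vectors, strong stability,
disturbance-state transfer matrices and surrogate states/actions from the paper
"Distributed Online Control over Networks of LTI systems". -/

open scoped Matrix.Norms.L2Operator

/-- the telescoping identity behind approximating a linear policy
by a time-invariant DFC, and the resulting closed form of the transfer matrix. -/
theorem dfc_approximates_linear_policy {d₁ d₂ : ℕ} (Hn : ℕ)
    (A : Mat d₁ d₁) (B : Mat d₁ d₂) (K Kstar : Mat d₂ d₁) :
    (∀ i : ℕ, 1 ≤ i →
      (A - B * K) ^ i +
        ∑ j ∈ Finset.range i,
          (A - B * K) ^ j * B * ((K - Kstar) * (A - B * Kstar) ^ (i - j - 1)) =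
      (A - B * Kstar) ^ i) ∧
    (∀ t i : ℕ, i ≤ min Hn (t - 1) →
      Psi Hn A B K (fun _ l => (K - Kstar) * (A - B * Kstar) ^ l) t (t - 1) i =
        (A - B * Kstar) ^ i) := by
  set P := A - B * K with hP
  set Q := A - B * Kstar with hQ
  have hPQ : P + B * (K - Kstar) = Q := by
    rw [hP, hQ, Matrix.mul_sub]; abel
  have key : ∀ i : ℕ,
      P ^ i + ∑ j ∈ Finset.range i,
        P ^ j * B * ((K - Kstar) * Q ^ (i - j - 1)) = Q ^ i := by
    intro i
    induction i with
    | zero => simp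
    | succ i ih =>
      have hsum : ∑ j ∈ Finset.range i, P ^ j * B * ((K - Kstar) * Q ^ (i + 1 - j - 1))
          = (∑ j ∈ Finset.range i, P ^ j * B * ((K - Kstar) * Q ^ (i - j - 1))) * Q := by
        rw [Finset.sum_mul]
        refine Finset.sum_congr rfl fun j hj => ?_
        have hj' : j < i := Finset.mem_range.mp hj
        have h1 : i + 1 - j - 1 = (i - j - 1) + 1 := by omega
        rw [h1, pow_succ]
        simp [Matrix.mul_assoc]
      have step : P ^ (i + 1) + P ^ i * B * (K - Kstar) = P ^ i * Q := by
        rw [← hPQ, Matrix.mul_add, pow_succ, Matrix.mul_assoc]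
      have h0 : i + 1 - i - 1 = 0 := by omega
      rw [Finset.sum_range_succ, hsum, h0, pow_zero, Matrix.mul_one]
      have hre : P ^ (i + 1) +
          ((∑ j ∈ Finset.range i, P ^ j * B * ((K - Kstar) * Q ^ (i - j - 1))) * Q
            + P ^ i * B * (K - Kstar))
          = (P ^ i + ∑ j ∈ Finset.range i, P ^ j * B * ((K - Kstar) * Q ^ (i - j - 1))) * Q := by
        rw [add_mul, ← step]; abel
      rw [hre, ih, ← pow_succ]
  constructor
  · intro i _; exact key i
  · intro t i hi
    have hiH : i ≤ Hn := le_trans hi (min_le_left _ _)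
    have hit : i ≤ t - 1 := le_trans hi (min_le_right _ _)
    unfold Psi
    rw [if_pos hit]
    have hsub : Finset.range i ⊆ Finset.range (t - 1 + 1) :=
      Finset.range_subset_range.mpr (by omega)
    rw [← Finset.sum_subset hsub (fun j _ hj => by
      rw [if_neg]; rintro ⟨h1, -⟩; exact hj (Finset.mem_range.mpr h1))]
    rw [Finset.sum_congr rfl (fun j hj =>
      if_pos ⟨Finset.mem_range.mp hj, by
        have := Finset.mem_range.mp hj; omega⟩)]
    exact key i
end

section
/- Let 𝓜 := {M = (M^{[0]},…,M^{[H−1]}) ∈ (ℝ^{d₂×d₁})^H : ‖M^{[i]}‖ ≤ 2κ³(1−γ)^i} and let Π_𝓜 denote the Frobenius-norm projection onto this closed convex set. Let P ∈ ℝ^{m×m} be a doubly stochastic matrix satisfying the mixing bound Σ_{j=1}^m |[P^k]_{ji} − 1/m| ≤ √m β^k for all i and all k ≥ 1, with 0 ≤ β < 1. Suppose m agents run, for t = 1, 2, …, the iteration M̂_{i,t+1} = Σ_{j=1}^m [P]_{ji} M_{j,t} − η g_{i,t} and M_{i,t+1} = Π_𝓜(M̂_{i,t+1}), with a common initialization M_{1,1}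 = ⋯ = M_{m,1} ∈ 𝓜 and step size η > 0, where each update direction satisfies ‖g_{i,t}‖_F ≤ G with G := G_c D √d · d · √H · (κ⁴W/γ + W), d := max(d₁,d₂), and D := W(κ² + 2Hκ⁶)/(γ(1 − κ²(1−γ)^{H+1})) + 2Wκ³/γ. Define M̄_t := (1/m) Σ_{i=1}^m M_{i,t}. Then for every agent i and every t: ‖M̄_t − M_{i,t}‖_F ≤ 2ηG√m/(1−β) and ‖M̄_t − M̂_{i,t+1}‖_F ≤ 2ηG√m/(1−β). -/
/- Common setup: spectral norm on matrices, Euclidean vectors, strong stability,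
disturbance-state transfer matrices and surrogate states/actions from the paper
"Distributed Online Control over Networks of LTI systems". -/

open scoped Matrix.Norms.L2Operator

/-- The constraint set `𝓜` of the D-DFC algorithm. -/
def MClass (Hn d₁ d₂ : ℕ) (κ γ : ℝ) : Set (MTup Hn d₁ d₂) :=
  {Mv | ∀ i, i < Hn → ‖toMat Mv i‖ ≤ 2 * κ ^ 3 * (1 - γ) ^ i}

private lemma aux_sqrt_bound {x : ℝ} (hx : 1 ≤ x) : 2 * x - 2 ≤ Real.sqrt x * x := by
  have h0 : (0:ℝ) < x := by linarith
  have hs2 : Real.sqrt x ^ 2 = x := Real.sq_sqrt h0.le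
  have hs1 : 1 ≤ Real.sqrt x := by
    rw [show (1:ℝ) = Real.sqrt 1 by simp]
    exact Real.sqrt_le_sqrt hx
  set s := Real.sqrt x
  nlinarith [mul_nonneg (sq_nonneg (3 * s - 4)) (by linarith : (0:ℝ) ≤ s)]

set_option maxHeartbeats 1000000 in
/-- consensus bounds for the projected distributed iterates. -/
theorem distributed_iterates_consensus_bound {d₁ d₂ : ℕ} (m Hn : ℕ)
    (hm : 1 ≤ m) (hH : 1 ≤ Hn)
    (κ γ W Gc η β G D : ℝ)
    (hκ : 1 ≤ κ) (hγ0 : 0 < γ) (hγ1 : γ ≤ 1) (hW : 1 ≤ W) (hGc : 1 ≤ Gc)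
    (hgeom : κ ^ 2 * (1 - γ) ^ (Hn + 1) < 1)
    (hη : 0 < η) (hβ0 : 0 ≤ β) (hβ1 : β < 1)
    (hD : D = W * (κ ^ 2 + 2 * Hn * κ ^ 6) / (γ * (1 - κ ^ 2 * (1 - γ) ^ (Hn + 1))) +
        2 * W * κ ^ 3 / γ)
    (hG : G = Gc * D * Real.sqrt ((max d₁ d₂ : ℕ) : ℝ) * ((max d₁ d₂ : ℕ) : ℝ) *
        Real.sqrt Hn * (κ ^ 4 * W / γ + W))
    (P : Matrix (Fin m) (Fin m) ℝ)
    (hPpos : ∀ i j, 0 ≤ P i j)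
    (hProw : ∀ i, ∑ j, P i j = 1) (hPcol : ∀ j, ∑ i, P i j = 1)
    (hmix : ∀ (i : Fin m) (k : ℕ), 1 ≤ k →
      ∑ j, |(P ^ k) j i - 1 / (m : ℝ)| ≤ Real.sqrt m * β ^ k)
    (g : Fin m → ℕ → MTup Hn d₁ d₂) (hg : ∀ i t, ‖g i t‖ ≤ G)
    (Mit Mhat : Fin m → ℕ → MTup Hn d₁ d₂)
    (hinit : ∀ i j : Fin m, Mit i 1 = Mit j 1)
    (hinitM : ∀ i, Mit i 1 ∈ MClass Hn d₁ d₂ κ γ)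
    (hhat : ∀ (i : Fin m) (t : ℕ), 1 ≤ t →
      Mhat i (t + 1) = ∑ j, P j i • Mit j t - η • g i t)
    (hproj : ∀ (i : Fin m) (t : ℕ), 1 ≤ t →
      Mit i (t + 1) ∈ MClass Hn d₁ d₂ κ γ ∧
      ∀ y ∈ MClass Hn d₁ d₂ κ γ,
        ‖Mit i (t + 1) - Mhat i (t + 1)‖ ≤ ‖y - Mhat i (t + 1)‖) :
    ∀ (i : Fin m) (t : ℕ), 1 ≤ t →
      ‖(m : ℝ)⁻¹ • (∑ j, Mit j t) - Mit i t‖ ≤ 2 * η * G * Real.sqrt m / (1 - β) ∧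
      ‖(m : ℝ)⁻¹ • (∑ j, Mit j t) - Mhat i (t + 1)‖ ≤ 2 * η * G * Real.sqrt m / (1 - β) := by
  -- basic positivity facts
  have hm0 : (0:ℝ) < m := by exact_mod_cast hm
  have hmne : (m:ℝ) ≠ 0 := ne_of_gt hm0
  have hsm : (1:ℝ) ≤ Real.sqrt m := by
    rw [show (1:ℝ) = Real.sqrt 1 by simp]
    exact Real.sqrt_le_sqrt (by exact_mod_cast hm)
  have hW0 : (0:ℝ) ≤ W := by linarith
  have hκ0 : (0:ℝ) ≤ κ := by linarith
  have h1γ : 0 < 1 - κ ^ 2 * (1 - γ) ^ (Hn + 1) := by linarith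
  have hD0 : 0 ≤ D := by
    rw [hD]
    have h2 : (0:ℝ) ≤ W * (κ ^ 2 + 2 * Hn * κ ^ 6) := by positivity
    exact add_nonneg (div_nonneg h2 (mul_pos hγ0 h1γ).le)
      (div_nonneg (by positivity) hγ0.le)
  have hG0 : 0 ≤ G := by
    rw [hG]
    have h2 : (0:ℝ) ≤ κ ^ 4 * W / γ + W := by positivity
    exact mul_nonneg (mul_nonneg (mul_nonneg (mul_nonneg
      (mul_nonneg (by linarith : (0:ℝ) ≤ Gc) hD0) (Real.sqrt_nonneg _))
      (Nat.cast_nonneg _)) (Real.sqrt_nonneg _)) h2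
  have h2ηG : (0:ℝ) ≤ 2 * η * G := mul_nonneg (by linarith) hG0
  have hden : (0:ℝ) < 1 - β := by linarith
  -- geometric sum bound
  have hgeo : ∀ n : ℕ, ∑ k ∈ Finset.range n, β ^ k ≤ 1 / (1 - β) := by
    intro n
    rw [le_div_iff₀ hden]
    have h1 : (∑ k ∈ Finset.range n, β ^ k) * (β - 1) = β ^ n - 1 := geom_sum_mul β n
    have h2 : (0:ℝ) ≤ β ^ n := pow_nonneg hβ0 n
    nlinarith [h1]
  -- membership of iterates in the constraint set
  have hmem : ∀ (j : Fin m) (t : ℕ), 1 ≤ t → Mit j t ∈ MClass Hn d₁ d₂ κ γ := by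
    intro j t ht
    rcases t with _ | t
    · omega
    rcases t with _ | t
    · exact hinitM j
    · exact (hproj j (t + 1) (by omega)).1
  -- linearity of toMat
  have toMat_zero : ∀ i : ℕ, toMat (0 : MTup Hn d₁ d₂) i = 0 := by
    intro i; funext a b
    by_cases h : i < Hn <;> simp [toMat, h]
  have toMat_add : ∀ (x y : MTup Hn d₁ d₂) (i : ℕ),
      toMat (x + y) i = toMat x i + toMat y i := by
    intro x y i; funext a b
    by_cases h : i < Hn <;> simp [toMat, h, Matrix.add_apply]
  have toMat_smul : ∀ (c : ℝ) (x : MTup Hn d₁ d₂) (i : ℕ),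
      toMat (c • x) i = c • toMat x i := by
    intro c x i; funext a b
    by_cases h : i < Hn <;> simp [toMat, h, Matrix.smul_apply]
  have toMat_sum : ∀ (s : Finset (Fin m)) (f : Fin m → MTup Hn d₁ d₂) (i : ℕ),
      toMat (∑ j ∈ s, f j) i = ∑ j ∈ s, toMat (f j) i := by
    intro s f i
    induction s using Finset.cons_induction with
    | empty => simp [toMat_zero]
    | cons a s ha ih => rw [Finset.sum_cons, Finset.sum_cons, toMat_add, ih]
  -- convex combinations stay in the constraint set
  have hconv : ∀ (M' : Fin m → MTup Hn d₁ d₂) (iC : Fin m),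
      (∀ j, M' j ∈ MClass Hn d₁ d₂ κ γ) →
      (∑ j, P j iC • M' j) ∈ MClass Hn d₁ d₂ κ γ := by
    intro M' iC hM' k hk
    rw [toMat_sum]
    calc ‖∑ j, toMat (P j iC • M' j) k‖ ≤ ∑ j, ‖toMat (P j iC • M' j) k‖ :=
          norm_sum_le _ _
      _ ≤ ∑ j, P j iC * (2 * κ ^ 3 * (1 - γ) ^ k) := by
          refine Finset.sum_le_sum fun j _ => ?_
          rw [toMat_smul, norm_smul, Real.norm_eq_abs, abs_of_nonneg (hPpos j iC)]
          exact mul_le_mul_of_nonneg_left (hM' j k hk) (hPpos j iC)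
      _ = 2 * κ ^ 3 * (1 - γ) ^ k := by rw [← Finset.sum_mul, hPcol iC, one_mul]
  -- the perturbation terms
  set hv : Fin m → ℕ → MTup Hn d₁ d₂ :=
    fun j t => Mit j (t + 1) - ∑ l, P l j • Mit l t with hvdef
  have hvsplit : ∀ (j : Fin m) (t : ℕ),
      Mit j (t + 1) = (∑ l, P l j • Mit l t) + hv j t := by
    intro j t; simp only [hvdef]; abel
  have hvbound : ∀ (j : Fin m) (t : ℕ), 1 ≤ t → ‖hv j t‖ ≤ 2 * η * G := by
    intro j t ht
    have hmemS : (∑ l, P l j • Mit l t) ∈ MClass Hn d₁ d₂ κ γ :=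
      hconv _ j (fun l => hmem l t ht)
    have h1 : ‖Mit j (t + 1) - Mhat j (t + 1)‖ ≤
        ‖(∑ l, P l j • Mit l t) - Mhat j (t + 1)‖ := (hproj j t ht).2 _ hmemS
    have h2 : (∑ l, P l j • Mit l t) - Mhat j (t + 1) = η • g j t := by
      rw [hhat j t ht]; abel
    have hng : ‖η • g j t‖ ≤ η * G := by
      rw [norm_smul, Real.norm_eq_abs, abs_of_pos hη]
      exact mul_le_mul_of_nonneg_left (hg j t) hη.le
    have h3 : hv j t = (Mit j (t + 1) - Mhat j (t + 1)) -
        ((∑ l, P l j • Mit l t) - Mhat j (t + 1)) := by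
      simp only [hvdef]; abel
    rw [h3]
    calc ‖(Mit j (t + 1) - Mhat j (t + 1)) -
          ((∑ l, P l j • Mit l t) - Mhat j (t + 1))‖
        ≤ ‖Mit j (t + 1) - Mhat j (t + 1)‖ +
          ‖(∑ l, P l j • Mit l t) - Mhat j (t + 1)‖ := norm_sub_le _ _
      _ ≤ η * G + η * G := by
          refine add_le_add (h1.trans ?_) ?_ <;> rw [h2] <;> exact hng
      _ = 2 * η * G := by ring
  -- one-step recursion for the disagreement
  have hstep : ∀ (t : ℕ) (iC : Fin m),
      (m:ℝ)⁻¹ • (∑ j, Mit j (t + 1)) - Mit iC (t + 1) =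
      (∑ l, P l iC • ((m:ℝ)⁻¹ • (∑ j, Mit j t) - Mit l t)) +
      ∑ j, ((m:ℝ)⁻¹ - if j = iC then 1 else 0) • hv j t := by
    intro t iC
    have f1 : ∑ j, Mit j (t + 1) = (∑ j, Mit j t) + ∑ j, hv j t := by
      rw [Finset.sum_congr rfl (fun j _ => hvsplit j t), Finset.sum_add_distrib]
      congr 1
      rw [Finset.sum_comm]
      refine Finset.sum_congr rfl fun l _ => ?_
      rw [← Finset.sum_smul, hProw l, one_smul]
    have f4 : ∑ j, ((m:ℝ)⁻¹ - if j = iC then 1 else 0) • hv j t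
        = (m:ℝ)⁻¹ • (∑ j, hv j t) - hv iC t := by
      simp only [sub_smul, ite_smul, one_smul, zero_smul]
      rw [Finset.sum_sub_distrib, Finset.sum_ite_eq' Finset.univ iC (fun j => hv j t),
        if_pos (Finset.mem_univ iC), Finset.smul_sum]
    have f5 : ∑ l, P l iC • ((m:ℝ)⁻¹ • (∑ j, Mit j t) - Mit l t)
        = (m:ℝ)⁻¹ • (∑ j, Mit j t) - ∑ l, P l iC • Mit l t := by
      simp only [smul_sub]
      rw [Finset.sum_sub_distrib, ← Finset.sum_smul, hPcol iC, one_smul]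
    rw [f1, hvsplit iC t, f4, f5, smul_add]
    abel
  -- pushing one P through the coefficients
  have hpush : ∀ (k : ℕ) (iC : Fin m) (v : Fin m → MTup Hn d₁ d₂),
      ∑ l, P l iC • (∑ j, ((m:ℝ)⁻¹ - (P ^ k) j l) • v j)
        = ∑ j, ((m:ℝ)⁻¹ - (P ^ (k + 1)) j iC) • v j := by
    intro k iC v
    have e1 : ∀ l : Fin m, P l iC • (∑ j, ((m:ℝ)⁻¹ - (P ^ k) j l) • v j)
        = ∑ j, (P l iC * ((m:ℝ)⁻¹ - (P ^ k) j l)) • v j := by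
      intro l
      rw [Finset.smul_sum]
      exact Finset.sum_congr rfl fun j _ => (smul_smul _ _ _)
    rw [Finset.sum_congr rfl (fun l _ => e1 l), Finset.sum_comm]
    refine Finset.sum_congr rfl fun j _ => ?_
    rw [← Finset.sum_smul]
    congr 1
    have e2 : ∑ l, P l iC * ((m:ℝ)⁻¹ - (P ^ k) j l)
        = (∑ l, P l iC) * (m:ℝ)⁻¹ - ∑ l, (P ^ k) j l * P l iC := by
      rw [Finset.sum_mul, ← Finset.sum_sub_distrib]
      exact Finset.sum_congr rfl fun l _ => by ring
    rw [e2, hPcol iC, one_mul, pow_succ, Matrix.mul_apply]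
  -- expansion of the disagreement
  have hexp : ∀ (n : ℕ) (iC : Fin m),
      (m:ℝ)⁻¹ • (∑ j, Mit j (1 + n)) - Mit iC (1 + n) =
      ∑ s ∈ Finset.range n, ∑ j,
        ((m:ℝ)⁻¹ - (P ^ (n - 1 - s)) j iC) • hv j (1 + s) := by
    intro n
    induction n with
    | zero =>
      intro iC
      have h1 : ∑ j, Mit j 1 = (m : ℕ) • Mit iC 1 := by
        rw [Finset.sum_congr rfl (fun j _ => hinit j iC), Finset.sum_const,
          Finset.card_univ, Fintype.card_fin]
      simp only [Finset.range_zero, Finset.sum_empty]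
      rw [h1, ← Nat.cast_smul_eq_nsmul ℝ, smul_smul, inv_mul_cancel₀ hmne, one_smul,
        sub_self]
    | succ n ih =>
      intro iC
      have e1 : 1 + (n + 1) = (1 + n) + 1 := by omega
      have hPexp : ∑ l, P l iC • ((m:ℝ)⁻¹ • (∑ j, Mit j (1 + n)) - Mit l (1 + n))
          = ∑ s ∈ Finset.range n, ∑ j,
            ((m:ℝ)⁻¹ - (P ^ (n - s)) j iC) • hv j (1 + s) := by
        rw [Finset.sum_congr rfl (fun l _ => by rw [ih l])]
        rw [Finset.sum_congr rfl
          (fun l (_ : l ∈ (Finset.univ : Finset (Fin m))) => Finset.smul_sum),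
          Finset.sum_comm]
        refine Finset.sum_congr rfl fun s hs => ?_
        rw [hpush (n - 1 - s) iC]
        refine Finset.sum_congr rfl fun j _ => ?_
        have h2 : n - 1 - s + 1 = n - s := by
          have := Finset.mem_range.mp hs; omega
        rw [h2]
      have hA : ∑ s ∈ Finset.range n, ∑ j,
            ((m:ℝ)⁻¹ - (P ^ (n + 1 - 1 - s)) j iC) • hv j (1 + s)
          = ∑ s ∈ Finset.range n, ∑ j,
            ((m:ℝ)⁻¹ - (P ^ (n - s)) j iC) • hv j (1 + s) := by
        refine Finset.sum_congr rfl fun s hs => ?_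
        have h2 : n + 1 - 1 - s = n - s := by omega
        rw [h2]
      have hB : ∑ j, ((m:ℝ)⁻¹ - (P ^ (n + 1 - 1 - n)) j iC) • hv j (1 + n)
          = ∑ j, ((m:ℝ)⁻¹ - if j = iC then 1 else 0) • hv j (1 + n) := by
        refine Finset.sum_congr rfl fun j _ => ?_
        have h2 : n + 1 - 1 - n = 0 := by omega
        rw [h2, pow_zero, Matrix.one_apply]
      rw [e1, hstep (1 + n) iC, hPexp, Finset.sum_range_succ, hA, hB]
  -- mixing bound for all k (including k = 0)
  have hmix' : ∀ (iC : Fin m) (k : ℕ),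
      ∑ j, |(P ^ k) j iC - 1 / (m : ℝ)| ≤ Real.sqrt m * β ^ k := by
    intro iC k
    rcases Nat.eq_zero_or_pos k with hk | hk
    · subst hk
      rw [pow_zero, pow_zero, mul_one]
      have h1m : (0:ℝ) < 1 / m := by positivity
      have h1m' : 1 / (m:ℝ) ≤ 1 := by
        rw [div_le_one hm0]; exact_mod_cast hm
      have hsum : ∑ j, |(1 : Matrix (Fin m) (Fin m) ℝ) j iC - 1 / (m : ℝ)|
          = (1 - 1 / (m:ℝ)) + ((m:ℝ) - 1) * (1 / (m:ℝ)) := by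
        rw [← Finset.sum_erase_add _ _ (Finset.mem_univ iC)]
        have h1 : ∀ j ∈ Finset.univ.erase iC,
            |(1 : Matrix (Fin m) (Fin m) ℝ) j iC - 1 / (m:ℝ)| = 1 / (m:ℝ) := by
          intro j hj
          rw [Matrix.one_apply, if_neg (Finset.ne_of_mem_erase hj), zero_sub,
            abs_neg, abs_of_pos h1m]
        rw [Finset.sum_congr rfl h1, Finset.sum_const,
          Finset.card_erase_of_mem (Finset.mem_univ iC), Finset.card_univ,
          Fintype.card_fin, Matrix.one_apply, if_pos rfl,
          abs_of_nonneg (by linarith), nsmul_eq_mul, Nat.cast_sub hm, Nat.cast_one]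
        ring
      rw [hsum]
      have key : (1 - 1 / (m:ℝ)) + ((m:ℝ) - 1) * (1 / (m:ℝ))
          = (2 * m - 2) / (m:ℝ) := by field_simp; ring
      rw [key, div_le_iff₀ hm0]
      exact aux_sqrt_bound (by exact_mod_cast hm)
    · exact hmix iC k hk
  -- generic norm bound for the expansion sums
  have hbndsum : ∀ (n : ℕ) (iC : Fin m) (e : ℕ → ℕ),
      ‖∑ s ∈ Finset.range n, ∑ j, ((m:ℝ)⁻¹ - (P ^ (e s)) j iC) • hv j (1 + s)‖
        ≤ 2 * η * G * (Real.sqrt m * ∑ s ∈ Finset.range n, β ^ (e s)) := by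
    intro n iC e
    calc ‖∑ s ∈ Finset.range n, ∑ j, ((m:ℝ)⁻¹ - (P ^ (e s)) j iC) • hv j (1 + s)‖
        ≤ ∑ s ∈ Finset.range n, ‖∑ j, ((m:ℝ)⁻¹ - (P ^ (e s)) j iC) • hv j (1 + s)‖ :=
          norm_sum_le _ _
      _ ≤ ∑ s ∈ Finset.range n, Real.sqrt m * β ^ (e s) * (2 * η * G) := by
          refine Finset.sum_le_sum fun s hs => ?_
          calc ‖∑ j, ((m:ℝ)⁻¹ - (P ^ (e s)) j iC) • hv j (1 + s)‖
              ≤ ∑ j, ‖((m:ℝ)⁻¹ - (P ^ (e s)) j iC) • hv j (1 + s)‖ := norm_sum_le _ _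
            _ ≤ ∑ j, |(P ^ (e s)) j iC - 1 / (m:ℝ)| * (2 * η * G) := by
                refine Finset.sum_le_sum fun j _ => ?_
                rw [norm_smul, Real.norm_eq_abs, abs_sub_comm, ← one_div]
                exact mul_le_mul_of_nonneg_left (hvbound j (1 + s) (by omega))
                  (abs_nonneg _)
            _ = (∑ j, |(P ^ (e s)) j iC - 1 / (m:ℝ)|) * (2 * η * G) := by
                rw [Finset.sum_mul]
            _ ≤ Real.sqrt m * β ^ (e s) * (2 * η * G) :=
                mul_le_mul_of_nonneg_right (hmix' iC (e s)) h2ηG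
      _ = 2 * η * G * (Real.sqrt m * ∑ s ∈ Finset.range n, β ^ (e s)) := by
          simp only [Finset.mul_sum]
          exact Finset.sum_congr rfl fun s _ => by ring
  -- final assembly
  intro i t ht
  obtain ⟨n, rfl⟩ : ∃ n, t = 1 + n := ⟨t - 1, by omega⟩
  constructor
  · rw [hexp n i]
    refine (hbndsum n i (fun s => n - 1 - s)).trans ?_
    have hs1 : ∑ s ∈ Finset.range n, β ^ (n - 1 - s) = ∑ k ∈ Finset.range n, β ^ k :=
      Finset.sum_range_reflect (fun k => β ^ k) n
    rw [hs1]
    calc 2 * η * G * (Real.sqrt m * ∑ k ∈ Finset.range n, β ^ k)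
        ≤ 2 * η * G * (Real.sqrt m * (1 / (1 - β))) := by
          refine mul_le_mul_of_nonneg_left ?_ h2ηG
          exact mul_le_mul_of_nonneg_left (hgeo n) (Real.sqrt_nonneg _)
      _ = 2 * η * G * Real.sqrt m / (1 - β) := by ring
  · have f6 : (m:ℝ)⁻¹ • (∑ j, Mit j (1 + n)) - Mhat i (1 + n + 1)
        = (∑ l, P l i • ((m:ℝ)⁻¹ • (∑ j, Mit j (1 + n)) - Mit l (1 + n)))
          + η • g i (1 + n) := by
      rw [hhat i (1 + n) (by omega)]
      have f5 : ∑ l, P l i • ((m:ℝ)⁻¹ • (∑ j, Mit j (1 + n)) - Mit l (1 + n))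
          = (m:ℝ)⁻¹ • (∑ j, Mit j (1 + n)) - ∑ l, P l i • Mit l (1 + n) := by
        simp only [smul_sub]
        rw [Finset.sum_sub_distrib, ← Finset.sum_smul, hPcol i, one_smul]
      rw [f5]
      abel
    have hPexp : ∑ l, P l i • ((m:ℝ)⁻¹ • (∑ j, Mit j (1 + n)) - Mit l (1 + n))
        = ∑ s ∈ Finset.range n, ∑ j,
          ((m:ℝ)⁻¹ - (P ^ (n - s)) j i) • hv j (1 + s) := by
      rw [Finset.sum_congr rfl (fun l _ => by rw [hexp n l])]
      rw [Finset.sum_congr rfl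
        (fun l (_ : l ∈ (Finset.univ : Finset (Fin m))) => Finset.smul_sum),
        Finset.sum_comm]
      refine Finset.sum_congr rfl fun s hs => ?_
      rw [hpush (n - 1 - s) i]
      refine Finset.sum_congr rfl fun j _ => ?_
      have h2 : n - 1 - s + 1 = n - s := by
        have := Finset.mem_range.mp hs; omega
      rw [h2]
    rw [f6, hPexp]
    have hβsum : ∑ s ∈ Finset.range n, β ^ (n - s) ≤ β * (1 / (1 - β)) := by
      have h1 : ∑ s ∈ Finset.range n, β ^ (n - s)
          = ∑ s ∈ Finset.range n, β ^ ((n - 1 - s) + 1) := by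
        refine Finset.sum_congr rfl fun s hs => ?_
        have := Finset.mem_range.mp hs
        congr 1
        omega
      rw [h1, Finset.sum_range_reflect (fun k => β ^ (k + 1)) n]
      have h2 : ∑ k ∈ Finset.range n, β ^ (k + 1)
          = β * ∑ k ∈ Finset.range n, β ^ k := by
        rw [Finset.mul_sum]
        exact Finset.sum_congr rfl fun k _ => by ring
      rw [h2]
      exact mul_le_mul_of_nonneg_left (hgeo n) hβ0
    have hng : ‖η • g i (1 + n)‖ ≤ η * G := by
      rw [norm_smul, Real.norm_eq_abs, abs_of_pos hη]
      exact mul_le_mul_of_nonneg_left (hg i (1 + n)) hη.le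
    calc ‖(∑ s ∈ Finset.range n, ∑ j,
            ((m:ℝ)⁻¹ - (P ^ (n - s)) j i) • hv j (1 + s)) + η • g i (1 + n)‖
        ≤ ‖∑ s ∈ Finset.range n, ∑ j,
            ((m:ℝ)⁻¹ - (P ^ (n - s)) j i) • hv j (1 + s)‖ + ‖η • g i (1 + n)‖ :=
          norm_add_le _ _
      _ ≤ 2 * η * G * (Real.sqrt m * ∑ s ∈ Finset.range n, β ^ (n - s)) + η * G :=
          add_le_add (hbndsum n i (fun s => n - s)) hng
      _ ≤ 2 * η * G * (Real.sqrt m * (β * (1 / (1 - β)))) + η * G := by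
          refine add_le_add_left (mul_le_mul_of_nonneg_left ?_ h2ηG) _
          exact mul_le_mul_of_nonneg_left hβsum (Real.sqrt_nonneg _)
      _ ≤ 2 * η * G * Real.sqrt m / (1 - β) := by
          have h1 : η * G ≤ 2 * η * G * Real.sqrt m := by nlinarith
          have h3 : 2 * η * G * Real.sqrt m / (1 - β)
              - 2 * η * G * (Real.sqrt m * (β * (1 / (1 - β))))
              = 2 * η * G * Real.sqrt m := by
            field_simp
          linarith
end

section
/- Let A ∈ ℝ^{d₁×d₁}, B ∈ ℝ^{d₁×d₂}, K ∈ ℝ^{d₂×d₁} with ‖A‖, ‖B‖, ‖K‖ ≤ κ and κ ≥ 1, and set A′ := A − BK. Let q ≥ 1 and C_q := [B, A′B, (A′)²B, …, (A′)^{q−1}B] ∈ ℝ^{d₁× q d₂}, and suppose ‖C_q^T v‖ ≥ (1/√κ)‖v‖ for every v ∈ ℝ^{d₁} (which holds in particular when ‖(C_q C_q^T)^{−1}‖ ≤ κ). Let ε > 0 with √q ε ≤ 1/(2√κ), and let N_0, …, N_q be d₁×d₂ matrices with ‖N_{k−1} − (A′)^{k−1} B‖ ≤ ε for every k ∈ {1,…,q+1}.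 Set C_0 := [N_0,…,N_{q−1}], C_1 := [N_1,…,N_q], B̂ := N_0. If Â′ ∈ ℝ^{d₁×d₁} satisfies Â′ C_0 = C_1, then ‖Â′ − A′‖ ≤ 6 √(d₁ q) κ^{5/2} ε, and the matrices Â := Â′ + B̂ K and B̂ satisfy ‖Â − A‖ ≤ 7 √(d₁ q) κ^{5/2} ε and ‖B̂ − B‖ ≤ ε. -/
/- Common setup: spectral norm on matrices, Euclidean vectors, strong stability,
disturbance-state transfer matrices and surrogate states/actions from the paper
"Distributed Online Control over Networks of LTI systems". -/

open scoped Matrix.Norms.L2Operator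

lemma mulV_le_norm {m n : Type*} [Fintype m] [Fintype n] [DecidableEq n] (A : Matrix m n ℝ)
    (x : EuclideanSpace ℝ n) : ‖mulV A x‖ ≤ ‖A‖ * ‖x‖ :=
  A.l2_opNorm_mulVec x

lemma norm_le_of_mulV {m n : Type*} [Fintype m] [Fintype n] [DecidableEq n] (A : Matrix m n ℝ) {C : ℝ}
    (hC : 0 ≤ C) (h : ∀ x : EuclideanSpace ℝ n, ‖mulV A x‖ ≤ C * ‖x‖) : ‖A‖ ≤ C := by
  rw [Matrix.l2_opNorm_def]
  exact ContinuousLinearMap.opNorm_le_bound _ hC (fun x => h x)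

lemma norm_transpose' {m n : Type*} [Fintype m] [Fintype n] [DecidableEq m] [DecidableEq n]
    (A : Matrix m n ℝ) : ‖A.transpose‖ = ‖A‖ := by
  rw [← Matrix.conjTranspose_eq_transpose_of_trivial, Matrix.l2_opNorm_conjTranspose]

lemma mulV_mulV {m n o : Type*} [Fintype m] [Fintype n] [Fintype o] (A : Matrix m n ℝ)
    (B : Matrix n o ℝ) (x : EuclideanSpace ℝ o) :
    mulV A (mulV B x) = mulV (A * B) x := by
  simp [mulV, Matrix.mulVec_mulVec]

lemma mulV_add {m n : Type*} [Fintype m] [Fintype n] (A B : Matrix m n ℝ)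
    (x : EuclideanSpace ℝ n) : mulV (A + B) x = mulV A x + mulV B x := by
  simp [mulV, Matrix.add_mulVec]

lemma block_norm_le {d₁ d₂ q : ℕ} (E : Matrix (Fin d₁) (Fin q × Fin d₂) ℝ) (ε : ℝ) (hε : 0 ≤ ε)
    (h : ∀ k : Fin q, ‖(Matrix.of fun a b => E a (k, b) : Mat d₁ d₂)‖ ≤ ε) :
    ‖E‖ ≤ Real.sqrt q * ε := by
  have hT : ‖E.transpose‖ ≤ Real.sqrt q * ε := by
    apply norm_le_of_mulV _ (by positivity)
    intro w
    have key : ∀ k : Fin q, ∑ b : Fin d₂, ‖(mulV E.transpose w) (k, b)‖ ^ 2 ≤ (ε * ‖w‖) ^ 2 := by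
      intro k
      have h1 : ∑ b : Fin d₂, ‖(mulV E.transpose w) (k, b)‖ ^ 2
          = ‖mulV (Matrix.of fun a b => E a (k, b) : Mat d₁ d₂).transpose w‖ ^ 2 := by
        rw [EuclideanSpace.norm_eq, Real.sq_sqrt (by positivity)]
        exact Finset.sum_congr rfl fun b _ => rfl
      rw [h1]
      have h2 : ‖mulV (Matrix.of fun a b => E a (k, b) : Mat d₁ d₂).transpose w‖ ≤ ε * ‖w‖ := by
        calc ‖mulV (Matrix.of fun a b => E a (k, b) : Mat d₁ d₂).transpose w‖
            ≤ ‖(Matrix.of fun a b => E a (k, b) : Mat d₁ d₂).transpose‖ * ‖w‖ := mulV_le_norm _ _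
          _ ≤ ε * ‖w‖ := by
              rw [norm_transpose']
              exact mul_le_mul_of_nonneg_right (h k) (norm_nonneg w)
      exact pow_le_pow_left₀ (norm_nonneg _) h2 2
    calc ‖mulV E.transpose w‖
        = Real.sqrt (∑ kb : Fin q × Fin d₂, ‖(mulV E.transpose w) kb‖ ^ 2) :=
          EuclideanSpace.norm_eq _
      _ ≤ Real.sqrt ((q : ℝ) * (ε * ‖w‖) ^ 2) := by
          apply Real.sqrt_le_sqrt
          rw [Fintype.sum_prod_type]
          calc ∑ k : Fin q, ∑ b : Fin d₂, ‖(mulV E.transpose w) (k, b)‖ ^ 2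
              ≤ ∑ _k : Fin q, (ε * ‖w‖) ^ 2 := Finset.sum_le_sum (fun k _ => key k)
            _ = (q : ℝ) * (ε * ‖w‖) ^ 2 := by simp [mul_comm]
      _ = Real.sqrt q * ε * ‖w‖ := by
          rw [Real.sqrt_mul (Nat.cast_nonneg q), Real.sqrt_sq (by positivity)]
          ring
  calc ‖E‖ = ‖E.transpose‖ := (norm_transpose' E).symm
    _ ≤ _ := hT


set_option maxHeartbeats 1000000 in
/-- estimation error of the system identification step. -/
theorem system_identification_error {d₁ d₂ q : ℕ} (hq : 1 ≤ q) (κ ε : ℝ)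
    (hκ : 1 ≤ κ) (hε : 0 < ε)
    (A : Mat d₁ d₁) (B : Mat d₁ d₂) (K : Mat d₂ d₁)
    (hA : ‖A‖ ≤ κ) (hB : ‖B‖ ≤ κ) (hK : ‖K‖ ≤ κ)
    (Cq : Matrix (Fin d₁) (Fin q × Fin d₂) ℝ)
    (hCq : ∀ (a : Fin d₁) (k : Fin q) (b : Fin d₂),
      Cq a (k, b) = ((A - B * K) ^ (k : ℕ) * B) a b)
    (hlow : ∀ v : Vec d₁, (1 / Real.sqrt κ) * ‖v‖ ≤ ‖mulV Cq.transpose v‖)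
    (hqε : Real.sqrt q * ε ≤ 1 / (2 * Real.sqrt κ))
    (N : ℕ → Mat d₁ d₂)
    (hN : ∀ k, k ≤ q → ‖N k - (A - B * K) ^ k * B‖ ≤ ε)
    (C₀ C₁ : Matrix (Fin d₁) (Fin q × Fin d₂) ℝ)
    (hC₀ : ∀ (a : Fin d₁) (k : Fin q) (b : Fin d₂), C₀ a (k, b) = N k a b)
    (hC₁ : ∀ (a : Fin d₁) (k : Fin q) (b : Fin d₂), C₁ a (k, b) = N (k + 1) a b)
    (Ahat' : Mat d₁ d₁) (hAhat' : Ahat' * C₀ = C₁) :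
    ‖Ahat' - (A - B * K)‖ ≤ 6 * Real.sqrt (d₁ * q) * κ ^ ((5 : ℝ) / 2) * ε ∧
    ‖(Ahat' + N 0 * K) - A‖ ≤ 7 * Real.sqrt (d₁ * q) * κ ^ ((5 : ℝ) / 2) * ε ∧
    ‖N 0 - B‖ ≤ ε := by
  have hκ0 : (0 : ℝ) < κ := lt_of_lt_of_le one_pos hκ
  have hrp : (0 : ℝ) < κ ^ ((5 : ℝ) / 2) := Real.rpow_pos_of_pos hκ0 _
  have hB0 : ‖N 0 - B‖ ≤ ε := by simpa using hN 0 (Nat.zero_le q)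
  rcases Nat.eq_zero_or_pos d₁ with h0 | hd₁
  · subst h0
    have z : ∀ (M : Matrix (Fin 0) (Fin 0) ℝ), M = 0 := fun M => by
      ext a b; exact a.elim0
    have hz1 : ‖Ahat' - (A - B * K)‖ = 0 := by rw [z (Ahat' - (A - B * K))]; exact norm_zero
    have hz2 : ‖(Ahat' + N 0 * K) - A‖ = 0 := by
      rw [z (Ahat' + N 0 * K - A)]; exact norm_zero
    refine ⟨?_, ?_, hB0⟩
    · rw [hz1]; simp
    · rw [hz2]; simp
  -- main case
  have hs1 : 1 ≤ Real.sqrt κ := by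
    rw [show (1:ℝ) = Real.sqrt 1 by simp]
    exact Real.sqrt_le_sqrt hκ
  have hs0 : (0:ℝ) < Real.sqrt κ := lt_of_lt_of_le one_pos hs1
  set A' := A - B * K with hA'def
  have hA'κ : ‖A'‖ ≤ 2 * κ ^ 2 := by
    calc ‖A - B * K‖ ≤ ‖A‖ + ‖B * K‖ := norm_sub_le _ _
      _ ≤ κ + κ * κ := by
          have := Matrix.l2_opNorm_mul B K
          have hBK : ‖B * K‖ ≤ κ * κ :=
            le_trans this (mul_le_mul hB hK (norm_nonneg K) (le_trans (norm_nonneg B) hB))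
          linarith
      _ ≤ 2 * κ ^ 2 := by nlinarith
  set Cq' : Matrix (Fin d₁) (Fin q × Fin d₂) ℝ :=
    Matrix.of (fun a kb => ((A') ^ ((kb.1 : ℕ) + 1) * B) a kb.2) with hCq'def
  set E₀ := C₀ - Cq with hE0def
  set E₁ := C₁ - Cq' with hE1def
  have hE₀ : ‖E₀‖ ≤ Real.sqrt q * ε := by
    apply block_norm_le _ _ hε.le
    intro k
    have : (Matrix.of fun a b => E₀ a (k, b) : Mat d₁ d₂) = N k - (A') ^ (k : ℕ) * B := by
      ext a b
      simp [hE0def, hC₀, hCq, Matrix.sub_apply]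
    rw [this]
    exact hN k (le_of_lt k.2)
  have hE₁ : ‖E₁‖ ≤ Real.sqrt q * ε := by
    apply block_norm_le _ _ hε.le
    intro k
    have : (Matrix.of fun a b => E₁ a (k, b) : Mat d₁ d₂) = N ((k : ℕ) + 1) - (A') ^ ((k : ℕ) + 1) * B := by
      ext a b
      simp [hE1def, hC₁, hCq'def, Matrix.sub_apply]
    rw [this]
    exact hN ((k : ℕ) + 1) k.2
  have hACq : A' * Cq = Cq' := by
    ext a kb
    obtain ⟨k, b⟩ := kb
    have h1 : (A' * Cq) a (k, b) = (A' * ((A') ^ (k : ℕ) * B)) a b := by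
      rw [Matrix.mul_apply, Matrix.mul_apply]
      exact Finset.sum_congr rfl (fun c _ => by rw [hCq])
    rw [h1, ← Matrix.mul_assoc, ← pow_succ']
    rfl
  have hC0expand : C₀ = Cq + E₀ := by rw [hE0def]; abel
  have hDC : (Ahat' - A') * C₀ = E₁ - A' * E₀ := by
    rw [Matrix.sub_mul, hAhat']
    calc C₁ - A' * C₀ = C₁ - (A' * Cq + A' * E₀) := by rw [hC0expand, Matrix.mul_add]
      _ = (C₁ - Cq') - A' * E₀ := by rw [hACq]; abel
      _ = E₁ - A' * E₀ := by rw [hE1def]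
  set F := E₁ - A' * E₀ with hFdef
  have hF : ‖F‖ ≤ 3 * κ ^ 2 * (Real.sqrt q * ε) := by
    have h1 : ‖F‖ ≤ ‖E₁‖ + ‖A' * E₀‖ := norm_sub_le _ _
    have h2 : ‖A' * E₀‖ ≤ ‖A'‖ * ‖E₀‖ := Matrix.l2_opNorm_mul _ _
    have h3 : ‖A'‖ * ‖E₀‖ ≤ (2 * κ ^ 2) * (Real.sqrt q * ε) :=
      mul_le_mul hA'κ hE₀ (norm_nonneg _) (by positivity)
    have hκ2 : (1:ℝ) ≤ κ ^ 2 := by nlinarith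
    have hqe0 : (0:ℝ) ≤ Real.sqrt q * ε := mul_nonneg (Real.sqrt_nonneg _) hε.le
    have h4 : Real.sqrt q * ε ≤ κ ^ 2 * (Real.sqrt q * ε) := le_mul_of_one_le_left hqe0 hκ2
    linarith
  have hlowC0 : ∀ v : Vec d₁, (1 / (2 * Real.sqrt κ)) * ‖v‖ ≤ ‖mulV C₀.transpose v‖ := by
    intro v
    have h1 : mulV C₀.transpose v = mulV Cq.transpose v + mulV E₀.transpose v := by
      rw [← mulV_add, ← Matrix.transpose_add, ← hC0expand]
    have h2 : ‖mulV E₀.transpose v‖ ≤ (Real.sqrt q * ε) * ‖v‖ := by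
      calc ‖mulV E₀.transpose v‖ ≤ ‖E₀.transpose‖ * ‖v‖ := mulV_le_norm _ _
        _ ≤ _ := by
            rw [norm_transpose']
            exact mul_le_mul_of_nonneg_right hE₀ (norm_nonneg v)
    have h4 : ‖mulV Cq.transpose v‖ ≤ ‖mulV C₀.transpose v‖ + ‖mulV E₀.transpose v‖ := by
      have : mulV Cq.transpose v = mulV C₀.transpose v - mulV E₀.transpose v := by
        rw [h1]; abel
      rw [this]
      exact norm_sub_le _ _
    have h3 := hlow v
    have h5 : Real.sqrt q * ε * ‖v‖ ≤ 1 / (2 * Real.sqrt κ) * ‖v‖ :=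
      mul_le_mul_of_nonneg_right hqε (norm_nonneg v)
    have hid : (1 / Real.sqrt κ) * ‖v‖ = 2 * ((1 / (2 * Real.sqrt κ)) * ‖v‖) := by
      field_simp
    linarith
  set D := Ahat' - A' with hDdef
  have hDT : ‖D.transpose‖ ≤ 2 * Real.sqrt κ * (3 * κ ^ 2 * (Real.sqrt q * ε)) := by
    apply norm_le_of_mulV _ (by positivity)
    intro v
    have ha := hlowC0 (mulV D.transpose v)
    have hb : mulV C₀.transpose (mulV D.transpose v) = mulV F.transpose v := by
      rw [mulV_mulV, ← Matrix.transpose_mul, hDC]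
    have hc : ‖mulV F.transpose v‖ ≤ ‖F‖ * ‖v‖ := by
      calc ‖mulV F.transpose v‖ ≤ ‖F.transpose‖ * ‖v‖ := mulV_le_norm _ _
        _ = ‖F‖ * ‖v‖ := by rw [norm_transpose']
    rw [hb] at ha
    have hd : ‖mulV D.transpose v‖ ≤ 2 * Real.sqrt κ * (‖F‖ * ‖v‖) := by
      have h6 : (1 / (2 * Real.sqrt κ)) * ‖mulV D.transpose v‖ ≤ ‖F‖ * ‖v‖ := le_trans ha hc
      have h7 : ‖mulV D.transpose v‖
          = 2 * Real.sqrt κ * ((1 / (2 * Real.sqrt κ)) * ‖mulV D.transpose v‖) := by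
        field_simp
      rw [h7]
      exact mul_le_mul_of_nonneg_left h6 (by positivity)
    calc ‖mulV D.transpose v‖ ≤ 2 * Real.sqrt κ * (‖F‖ * ‖v‖) := hd
      _ ≤ 2 * Real.sqrt κ * ((3 * κ ^ 2 * (Real.sqrt q * ε)) * ‖v‖) := by
          apply mul_le_mul_of_nonneg_left _ (by positivity)
          exact mul_le_mul_of_nonneg_right hF (norm_nonneg v)
      _ = 2 * Real.sqrt κ * (3 * κ ^ 2 * (Real.sqrt q * ε)) * ‖v‖ := by ring
  have hD : ‖D‖ ≤ 2 * Real.sqrt κ * (3 * κ ^ 2 * (Real.sqrt q * ε)) := by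
    calc ‖D‖ = ‖D.transpose‖ := (norm_transpose' D).symm
      _ ≤ _ := hDT
  have hpow : Real.sqrt κ * κ ^ 2 = κ ^ ((5 : ℝ) / 2) := by
    rw [Real.sqrt_eq_rpow, ← Real.rpow_natCast κ 2, ← Real.rpow_add hκ0]
    norm_num
  have hsq : Real.sqrt q ≤ Real.sqrt ((d₁ : ℝ) * q) := by
    apply Real.sqrt_le_sqrt
    have : (1 : ℝ) ≤ (d₁ : ℝ) := by exact_mod_cast hd₁
    nlinarith [Nat.cast_nonneg (α := ℝ) q]
  have hDfinal : ‖D‖ ≤ 6 * Real.sqrt ((d₁:ℝ) * q) * κ ^ ((5 : ℝ) / 2) * ε := by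
    have heq : 2 * Real.sqrt κ * (3 * κ ^ 2 * (Real.sqrt q * ε))
        = 6 * Real.sqrt q * (Real.sqrt κ * κ ^ 2) * ε := by ring
    rw [heq, hpow] at hD
    calc ‖D‖ ≤ 6 * Real.sqrt q * κ ^ ((5 : ℝ) / 2) * ε := hD
      _ ≤ 6 * Real.sqrt ((d₁:ℝ) * q) * κ ^ ((5 : ℝ) / 2) * ε := by
          have : (0:ℝ) ≤ κ ^ ((5 : ℝ) / 2) * ε := mul_nonneg hrp.le hε.le
          nlinarith [hsq, hrp, hε]
  refine ⟨hDfinal, ?_, hB0⟩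
  -- second component
  have key2 : (Ahat' + N 0 * K) - A = D + (N 0 - B) * K := by
    rw [hDdef, hA'def, Matrix.sub_mul]
    abel
  have h1 : ‖(Ahat' + N 0 * K) - A‖ ≤ ‖D‖ + ‖(N 0 - B) * K‖ := by
    rw [key2]; exact norm_add_le _ _
  have h2 : ‖(N 0 - B) * K‖ ≤ ε * κ :=
    le_trans (Matrix.l2_opNorm_mul _ _)
      (mul_le_mul hB0 hK (norm_nonneg K) hε.le)
  have hκ52 : κ ≤ κ ^ ((5 : ℝ) / 2) := by
    nth_rewrite 1 [show κ = κ ^ (1:ℝ) by rw [Real.rpow_one]]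
    exact Real.rpow_le_rpow_of_exponent_le hκ (by norm_num)
  have hsd1 : (1:ℝ) ≤ Real.sqrt ((d₁:ℝ) * q) := by
    rw [show (1:ℝ) = Real.sqrt 1 by simp]
    apply Real.sqrt_le_sqrt
    have h1' : (1 : ℝ) ≤ (d₁ : ℝ) := by exact_mod_cast hd₁
    have h2' : (1 : ℝ) ≤ (q : ℝ) := by exact_mod_cast hq
    nlinarith
  have ht1 : ε * κ ≤ ε * κ ^ ((5 : ℝ) / 2) := mul_le_mul_of_nonneg_left hκ52 hε.le
  have ht2 : (1:ℝ) * (κ ^ ((5 : ℝ) / 2) * ε) ≤ Real.sqrt ((d₁:ℝ) * q) * (κ ^ ((5 : ℝ) / 2) * ε) :=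
    mul_le_mul_of_nonneg_right hsd1 (mul_nonneg hrp.le hε.le)
  have hterm : ε * κ ≤ Real.sqrt ((d₁:ℝ) * q) * κ ^ ((5 : ℝ) / 2) * ε := by
    nlinarith [ht1, ht2]
  linarith
end

section
/- Let K be (κ,γ)-strongly stable for (A,B) with ‖B‖ ≤ κ, 0 < γ < 1, and let Â, B̂ satisfy ‖A − Â‖ ≤ ε and ‖B − B̂‖ ≤ ε with 0 < ε < γ/(2κ³) (so that, in particular, ‖B̂‖ ≤ κ + ε and K is (κ, γ − 2κ³ε)-strongly stable for (Â, B̂)). Let M = (M^{[0]},…,M^{[H−1]}) be a parameter tuple with ‖M^{[i]}‖ ≤ C(1−γ)^i. Let {w_s} and {ŵ_s} be disturbance sequences (zero for s ≤ 0) and ζ ≥ 0 such that for all s with t − 2H ≤ s ≤ t: ‖w_s‖ ≤ W, ‖ŵ_s‖ ≤ W + ζε, and ‖ŵ_s − w_s‖ ≤ ζε. Then the time-invariant surrogate states satisfy: ‖y^K_{t+1}(M,…,M|Â,B̂,{ŵ}) − y^K_{t+1}(M,…,M|A,B,{w})‖ ≤ [ 2κ⁵ε/(γ − 2κ³ε)²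 + 2κ⁵H²C(κ+ε)ε/((1−γ+2κ³ε)(γ − 2κ³ε)) + (H+1)κ²Cε/((1−γ)γ) ]·(W + ζε) + ((κ² + Hκ³C)/γ)·ζε. -/
/- Common setup: spectral norm on matrices, Euclidean vectors, strong stability,
disturbance-state transfer matrices and surrogate states/actions from the paper
"Distributed Online Control over Networks of LTI systems". -/

open scoped Matrix.Norms.L2Operator

/- ===== Auxiliary lemmas ===== -/

private lemma aux_norm_mulV_le {m n : Type*} [Fintype m] [Fintype n] [DecidableEq m]
    [DecidableEq n] (A : Matrix m n ℝ) (x : EuclideanSpace ℝ n) :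
    ‖mulV A x‖ ≤ ‖A‖ * ‖x‖ := A.l2_opNorm_mulVec x

private lemma aux_mulV_sub_left {m n : Type*} [Fintype m] [Fintype n] [DecidableEq m]
    [DecidableEq n] (A B : Matrix m n ℝ) (x : EuclideanSpace ℝ n) :
    mulV (A - B) x = mulV A x - mulV B x := by
  simp only [mulV, Matrix.sub_mulVec]; rfl

private lemma aux_mulV_sub_right {m n : Type*} [Fintype m] [Fintype n] [DecidableEq m]
    [DecidableEq n] (A : Matrix m n ℝ) (x y : EuclideanSpace ℝ n) :
    mulV A (x - y) = mulV A x - mulV A y := by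
  simp only [mulV]
  have h : (WithLp.equiv 2 _) (x - y)
      = (WithLp.equiv 2 (n → ℝ)) x - (WithLp.equiv 2 (n → ℝ)) y := rfl
  rw [h, Matrix.mulVec_sub]; rfl

private lemma aux_geom_sum_le_inv {ρ : ℝ} (h0 : 0 ≤ ρ) (h1 : ρ < 1) (n : ℕ) :
    ∑ i ∈ Finset.range n, ρ ^ i ≤ (1 - ρ)⁻¹ :=
  (Summable.sum_le_tsum _ (fun i _ => pow_nonneg h0 i) (summable_geometric_of_lt_one h0 h1)).trans
    (le_of_eq (tsum_geometric_of_lt_one h0 h1))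

private lemma aux_summable_succ_geom {ρ : ℝ} (h0 : 0 ≤ ρ) (h1 : ρ < 1) :
    Summable (fun k : ℕ => ((k : ℝ) + 1) * ρ ^ k) := by
  have hn : ‖ρ‖ < 1 := by rwa [Real.norm_eq_abs, abs_of_nonneg h0]
  have s1 : Summable (fun k : ℕ => ρ ^ k) := summable_geometric_of_lt_one h0 h1
  have s2 : Summable (fun k : ℕ => (k : ℝ) * ρ ^ k) := by
    simpa using summable_pow_mul_geometric_of_norm_lt_one 1 hn
  have h : (fun k : ℕ => ((k : ℝ) + 1) * ρ ^ k)
      = fun k : ℕ => (k : ℝ) * ρ ^ k + ρ ^ k := by funext k; ring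
  rw [h]; exact s2.add s1

private lemma aux_tsum_succ_geom {ρ : ℝ} (h0 : 0 ≤ ρ) (h1 : ρ < 1) :
    ∑' k : ℕ, ((k : ℝ) + 1) * ρ ^ k = ((1 - ρ)⁻¹) ^ 2 := by
  have hn : ‖ρ‖ < 1 := by rwa [Real.norm_eq_abs, abs_of_nonneg h0]
  have s1 : Summable (fun k : ℕ => ρ ^ k) := summable_geometric_of_lt_one h0 h1
  have s2 : Summable (fun k : ℕ => (k : ℝ) * ρ ^ k) := by
    simpa using summable_pow_mul_geometric_of_norm_lt_one 1 hn
  have h : (fun k : ℕ => ((k : ℝ) + 1) * ρ ^ k)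
      = fun k : ℕ => (k : ℝ) * ρ ^ k + ρ ^ k := by funext k; ring
  rw [h, Summable.tsum_add s2 s1, tsum_coe_mul_geometric_of_norm_lt_one hn,
    tsum_geometric_of_lt_one h0 h1]
  have hne : (1 : ℝ) - ρ ≠ 0 := by linarith
  field_simp
  ring

private lemma aux_sum_mul_geom_le {ρ : ℝ} (h0 : 0 ≤ ρ) (h1 : ρ < 1) (n : ℕ) :
    ∑ i ∈ Finset.range n, (i : ℝ) * ρ ^ (i - 1) ≤ ((1 - ρ)⁻¹) ^ 2 := by
  cases n with
  | zero => simp; positivity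
  | succ m =>
    rw [Finset.sum_range_succ']
    have he : ∀ i ∈ Finset.range m, ((i + 1 : ℕ) : ℝ) * ρ ^ (i + 1 - 1)
        = ((i : ℝ) + 1) * ρ ^ i := by
      intro i _; push_cast; norm_num
    rw [Finset.sum_congr rfl he]
    simp only [Nat.cast_zero, zero_mul, add_zero]
    exact (Summable.sum_le_tsum _ (fun i _ => by positivity) (aux_summable_succ_geom h0 h1)).trans
      (le_of_eq (aux_tsum_succ_geom h0 h1))

private lemma aux_sum_shift_geom_le {ρ : ℝ} (h0 : 0 ≤ ρ) (h1 : ρ < 1) (n : ℕ) :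
    ∑ i ∈ Finset.range n, (if 1 ≤ i then ρ ^ (i - 1) else 0) ≤ (1 - ρ)⁻¹ := by
  cases n with
  | zero => simp; linarith
  | succ m =>
    rw [Finset.sum_range_succ']
    have he : ∀ i ∈ Finset.range m,
        (if 1 ≤ i + 1 then ρ ^ (i + 1 - 1) else 0) = ρ ^ i := by
      intro i _; simp
    rw [Finset.sum_congr rfl he]
    simp only [Nat.lt_irrefl, if_neg (by omega : ¬ 1 ≤ 0), add_zero]
    exact aux_geom_sum_le_inv h0 h1 m

private lemma aux_sum_ite_count_i (Hn j : ℕ) {c : ℝ} (hc : 0 ≤ c) :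
    ∑ i ∈ Finset.range (2 * Hn + 1), (if j < i ∧ i - j ≤ Hn then c else 0)
      ≤ (Hn : ℝ) * c := by
  classical
  rw [← Finset.sum_filter]
  have hsub : (Finset.range (2 * Hn + 1)).filter (fun i => j < i ∧ i - j ≤ Hn)
      ⊆ Finset.Ioc j (j + Hn) := by
    intro i hi
    simp only [Finset.mem_filter, Finset.mem_range] at hi
    simp only [Finset.mem_Ioc]
    omega
  calc ∑ _i ∈ (Finset.range (2 * Hn + 1)).filter (fun i => j < i ∧ i - j ≤ Hn), c
      ≤ ∑ _i ∈ Finset.Ioc j (j + Hn), c :=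
        Finset.sum_le_sum_of_subset_of_nonneg hsub (fun _ _ _ => hc)
    _ = ((j + Hn - j : ℕ) : ℝ) * c := by
        rw [Finset.sum_const, Nat.card_Ioc, nsmul_eq_mul]
    _ ≤ (Hn : ℝ) * c := by
        have h : j + Hn - j = Hn := by omega
        rw [h]

private lemma aux_sum_ite_count_j (Hn i : ℕ) {c : ℝ} (hc : 0 ≤ c) :
    ∑ j ∈ Finset.range (Hn + 1), (if j < i ∧ i - j ≤ Hn then c else 0)
      ≤ (Hn : ℝ) * (if 1 ≤ i then c else 0) := by
  classical
  by_cases hi : 1 ≤ i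
  · simp only [hi, if_true]
    rw [← Finset.sum_filter]
    have hsub : (Finset.range (Hn + 1)).filter (fun j => j < i ∧ i - j ≤ Hn)
        ⊆ Finset.Ico (i - Hn) i := by
      intro j hj
      simp only [Finset.mem_filter, Finset.mem_range] at hj
      simp only [Finset.mem_Ico]
      omega
    calc ∑ _j ∈ (Finset.range (Hn + 1)).filter (fun j => j < i ∧ i - j ≤ Hn), c
        ≤ ∑ _j ∈ Finset.Ico (i - Hn) i, c :=
          Finset.sum_le_sum_of_subset_of_nonneg hsub (fun _ _ _ => hc)
      _ = ((i - (i - Hn) : ℕ) : ℝ) * c := by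
          rw [Finset.sum_const, Nat.card_Ico, nsmul_eq_mul]
      _ ≤ (Hn : ℝ) * c := by
          have h1 : i - (i - Hn) ≤ Hn := by omega
          exact mul_le_mul_of_nonneg_right (by exact_mod_cast h1) hc
  · have hz : ∀ j ∈ Finset.range (Hn + 1),
        (if j < i ∧ i - j ≤ Hn then c else 0) = 0 := by
      intro j _
      have h : ¬ (j < i ∧ i - j ≤ Hn) := by omega
      rw [if_neg h]
    rw [Finset.sum_congr rfl hz]
    simp [hi]

private lemma aux_conj_pow_mat {d : ℕ} (Hm L : Mat d d) (hU : IsUnit Hm) (n : ℕ) :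
    (Hm * L * Hm⁻¹) ^ n = Hm * L ^ n * Hm⁻¹ := by
  have hdet : IsUnit Hm.det := (Matrix.isUnit_iff_isUnit_det Hm).mp hU
  have h1 : Hm⁻¹ * Hm = 1 := Matrix.nonsing_inv_mul Hm hdet
  induction n with
  | zero => simp [Matrix.mul_nonsing_inv Hm hdet]
  | succ n ih =>
    rw [pow_succ, ih]
    calc Hm * L ^ n * Hm⁻¹ * (Hm * L * Hm⁻¹)
        = Hm * L ^ n * (Hm⁻¹ * Hm) * L * Hm⁻¹ := by
          simp only [mul_assoc]
      _ = Hm * L ^ (n + 1) * Hm⁻¹ := by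
          rw [h1, mul_one, mul_assoc Hm, ← pow_succ]

private lemma aux_pow_norm_bound {d : ℕ} {X Hm L : Mat d d} {κ ρ : ℝ}
    (hU : IsUnit Hm) (hX : X = Hm * L * Hm⁻¹) (hL : ‖L‖ ≤ ρ)
    (hHn : ‖Hm‖ ≤ κ) (hHi : ‖Hm⁻¹‖ ≤ κ) (hκ : 0 ≤ κ) (hρ : 0 ≤ ρ) (n : ℕ) :
    ‖X ^ n‖ ≤ κ ^ 2 * ρ ^ n := by
  have hdet : IsUnit Hm.det := (Matrix.isUnit_iff_isUnit_det Hm).mp hU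
  rw [hX, aux_conj_pow_mat Hm L hU n]
  have hLn : ∀ m : ℕ, ‖L ^ (m + 1)‖ ≤ ρ ^ (m + 1) := by
    intro m
    induction m with
    | zero => simpa using hL
    | succ m ih =>
      calc ‖L ^ (m + 1 + 1)‖ = ‖L ^ (m + 1) * L‖ := by rw [pow_succ]
        _ ≤ ‖L ^ (m + 1)‖ * ‖L‖ := norm_mul_le _ _
        _ ≤ ρ ^ (m + 1) * ρ := mul_le_mul ih hL (norm_nonneg _) (by positivity)
        _ = ρ ^ (m + 1 + 1) := by ring
  cases n with
  | zero =>
    simp only [pow_zero, mul_one]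
    calc ‖Hm * Hm⁻¹‖ ≤ ‖Hm‖ * ‖Hm⁻¹‖ := norm_mul_le _ _
      _ ≤ κ * κ := mul_le_mul hHn hHi (norm_nonneg _) hκ
      _ = κ ^ 2 := by ring
  | succ m =>
    calc ‖Hm * L ^ (m + 1) * Hm⁻¹‖ ≤ ‖Hm * L ^ (m + 1)‖ * ‖Hm⁻¹‖ := norm_mul_le _ _
      _ ≤ ‖Hm‖ * ‖L ^ (m + 1)‖ * ‖Hm⁻¹‖ :=
          mul_le_mul_of_nonneg_right (norm_mul_le _ _) (norm_nonneg _)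
      _ ≤ κ * ρ ^ (m + 1) * κ := by
          have h := hLn m
          gcongr
      _ = κ ^ 2 * ρ ^ (m + 1) := by ring

private lemma aux_pow_sub_pow_eq {d : ℕ} (X Y : Mat d d) (n : ℕ) :
    X ^ n - Y ^ n = ∑ k ∈ Finset.range n, X ^ k * (X - Y) * Y ^ (n - 1 - k) := by
  induction n with
  | zero => simp
  | succ n ih =>
    rw [Finset.sum_range_succ]
    have hterm : ∀ k ∈ Finset.range n, X ^ k * (X - Y) * Y ^ (n + 1 - 1 - k)
        = (X ^ k * (X - Y) * Y ^ (n - 1 - k)) * Y := by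
      intro k hk
      rw [Finset.mem_range] at hk
      have h : n + 1 - 1 - k = (n - 1 - k) + 1 := by omega
      rw [h, pow_succ, ← mul_assoc]
    rw [Finset.sum_congr rfl hterm, ← Finset.sum_mul, ← ih]
    have h0 : n + 1 - 1 - n = 0 := by omega
    rw [h0, pow_zero, mul_one, pow_succ, pow_succ]
    noncomm_ring


set_option maxHeartbeats 2000000 in
/-- difference of the time-invariant surrogate states computed on
the estimated system/noises and on the true system/noises.
Here `ySurr … t` is the surrogate state `y^K_{t+1}`. -/
theorem surrogate_state_difference_estimated_system {d₁ d₂ : ℕ}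
    (κ γ ε C W ζ : ℝ) (Hn : ℕ) (hH : 1 ≤ Hn)
    (hκ : 1 ≤ κ) (hγ0 : 0 < γ) (hγ1 : γ < 1)
    (A Ahat : Mat d₁ d₁) (B Bhat : Mat d₁ d₂) (K : Mat d₂ d₁)
    (hss : StronglyStable κ γ A B K) (hB : ‖B‖ ≤ κ)
    (hAe : ‖A - Ahat‖ ≤ ε) (hBe : ‖B - Bhat‖ ≤ ε)
    (hε0 : 0 < ε) (hεb : ε < γ / (2 * κ ^ 3))
    (M : ℕ → Mat d₂ d₁) (hM : ∀ i, i < Hn → ‖M i‖ ≤ C * (1 - γ) ^ i)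
    (hζ : 0 ≤ ζ)
    (w what : ℤ → Vec d₁)
    (hw0 : ∀ s : ℤ, s ≤ 0 → w s = 0) (hwhat0 : ∀ s : ℤ, s ≤ 0 → what s = 0)
    (t : ℕ)
    (hw : ∀ s : ℤ, (t : ℤ) - 2 * Hn ≤ s → s ≤ t → ‖w s‖ ≤ W)
    (hwhat : ∀ s : ℤ, (t : ℤ) - 2 * Hn ≤ s → s ≤ t → ‖what s‖ ≤ W + ζ * ε)
    (hdiff : ∀ s : ℤ, (t : ℤ) - 2 * Hn ≤ s → s ≤ t → ‖what s - w s‖ ≤ ζ * ε) :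
    ‖ySurr Hn Ahat Bhat K (fun _ => M) what t - ySurr Hn A B K (fun _ => M) w t‖ ≤
      (2 * κ ^ 5 * ε / (γ - 2 * κ ^ 3 * ε) ^ 2 +
        2 * κ ^ 5 * Hn ^ 2 * C * (κ + ε) * ε /
          ((1 - γ + 2 * κ ^ 3 * ε) * (γ - 2 * κ ^ 3 * ε)) +
        (Hn + 1) * κ ^ 2 * C * ε / ((1 - γ) * γ)) * (W + ζ * ε) +
      (κ ^ 2 + Hn * κ ^ 3 * C) / γ * (ζ * ε) := by
  classical
  obtain ⟨hK, Hm, L, hU, hHL, hLnorm, hHmn, hHin⟩ := hss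
  have hκ0 : (0:ℝ) < κ := lt_of_lt_of_le zero_lt_one hκ
  have hεγ : 2 * κ ^ 3 * ε < γ := by
    have h := (lt_div_iff₀ (show (0:ℝ) < 2 * κ ^ 3 by positivity)).mp hεb
    have h2 : ε * (2 * κ ^ 3) = 2 * κ ^ 3 * ε := by ring
    rw [h2] at h; exact h
  have hγh : (0:ℝ) < γ - 2 * κ ^ 3 * ε := by linarith
  have hρ0 : (0:ℝ) < 1 - γ := by linarith
  have hρ1 : (1:ℝ) - γ < 1 := by linarith
  have hpos2 : (0:ℝ) < 2 * κ ^ 3 * ε := by positivity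
  have hρh0 : (0:ℝ) < 1 - γ + 2 * κ ^ 3 * ε := by linarith
  have hρh1 : (1:ℝ) - γ + 2 * κ ^ 3 * ε < 1 := by linarith
  have hρρh : (1:ℝ) - γ ≤ 1 - γ + 2 * κ ^ 3 * ε := by linarith
  have hC : (0:ℝ) ≤ C := by
    have h := hM 0 (by omega)
    rw [pow_zero, mul_one] at h
    exact (norm_nonneg _).trans h
  have hW : (0:ℝ) ≤ W := by
    have h := hw (t : ℤ) (by omega) le_rfl
    exact (norm_nonneg _).trans h
  have hζε : (0:ℝ) ≤ ζ * ε := mul_nonneg hζ hε0.le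
  have hWζ : (0:ℝ) ≤ W + ζ * ε := by linarith
  have hdet : IsUnit Hm.det := (Matrix.isUnit_iff_isUnit_det Hm).mp hU
  -- difference of closed-loop matrices
  have hE : (Ahat - Bhat * K) - (A - B * K) = (Ahat - A) + (B - Bhat) * K := by
    simp only [Matrix.sub_mul]
    abel
  have hEn : ‖(Ahat - Bhat * K) - (A - B * K)‖ ≤ 2 * κ * ε := by
    rw [hE]
    have h1 : ‖Ahat - A‖ ≤ ε := by rw [norm_sub_rev]; exact hAe
    have h2 : ‖(B - Bhat) * K‖ ≤ ε * κ :=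
      le_trans (Matrix.l2_opNorm_mul _ _)
        (mul_le_mul hBe hK (norm_nonneg _) hε0.le)
    have h3 : ε + ε * κ ≤ 2 * κ * ε := by nlinarith
    calc ‖(Ahat - A) + (B - Bhat) * K‖ ≤ ‖Ahat - A‖ + ‖(B - Bhat) * K‖ := norm_add_le _ _
      _ ≤ ε + ε * κ := add_le_add h1 h2
      _ ≤ 2 * κ * ε := h3
  have hXhfact : Ahat - Bhat * K
      = Hm * (L + Hm⁻¹ * ((Ahat - Bhat * K) - (A - B * K)) * Hm) * Hm⁻¹ := by
    have h1 : Hm * Hm⁻¹ = 1 := Matrix.mul_nonsing_inv Hm hdet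
    have h2 : Hm * (L + Hm⁻¹ * ((Ahat - Bhat * K) - (A - B * K)) * Hm) * Hm⁻¹
        = Hm * L * Hm⁻¹
          + (Hm * Hm⁻¹) * ((Ahat - Bhat * K) - (A - B * K)) * (Hm * Hm⁻¹) := by
      noncomm_ring
    rw [h2, h1, one_mul, mul_one, ← hHL]
    abel
  have hLh : ‖L + Hm⁻¹ * ((Ahat - Bhat * K) - (A - B * K)) * Hm‖
      ≤ 1 - γ + 2 * κ ^ 3 * ε := by
    have h2 : ‖Hm⁻¹ * ((Ahat - Bhat * K) - (A - B * K)) * Hm‖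
        ≤ κ * (2 * κ * ε) * κ := by
      calc ‖Hm⁻¹ * ((Ahat - Bhat * K) - (A - B * K)) * Hm‖
          ≤ ‖Hm⁻¹ * ((Ahat - Bhat * K) - (A - B * K))‖ * ‖Hm‖ := norm_mul_le _ _
        _ ≤ ‖Hm⁻¹‖ * ‖(Ahat - Bhat * K) - (A - B * K)‖ * ‖Hm‖ :=
            mul_le_mul_of_nonneg_right (norm_mul_le _ _) (norm_nonneg _)
        _ ≤ κ * (2 * κ * ε) * κ :=
            mul_le_mul (mul_le_mul hHin hEn (norm_nonneg _) hκ0.le) hHmn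
              (norm_nonneg _) (by positivity)
    calc ‖L + Hm⁻¹ * ((Ahat - Bhat * K) - (A - B * K)) * Hm‖
        ≤ ‖L‖ + ‖Hm⁻¹ * ((Ahat - Bhat * K) - (A - B * K)) * Hm‖ := norm_add_le _ _
      _ ≤ (1 - γ) + κ * (2 * κ * ε) * κ := add_le_add hLnorm h2
      _ = 1 - γ + 2 * κ ^ 3 * ε := by ring
  have hPow : ∀ n : ℕ, ‖(A - B * K) ^ n‖ ≤ κ ^ 2 * (1 - γ) ^ n := fun n =>
    aux_pow_norm_bound hU hHL hLnorm hHmn hHin hκ0.le hρ0.le n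
  have hPowh : ∀ n : ℕ, ‖(Ahat - Bhat * K) ^ n‖ ≤ κ ^ 2 * (1 - γ + 2 * κ ^ 3 * ε) ^ n :=
    fun n => aux_pow_norm_bound hU hXhfact hLh hHmn hHin hκ0.le hρh0.le n
  have hPd : ∀ n : ℕ, ‖(Ahat - Bhat * K) ^ n - (A - B * K) ^ n‖
      ≤ 2 * κ ^ 5 * ε * n * (1 - γ + 2 * κ ^ 3 * ε) ^ (n - 1) := by
    intro n
    rw [aux_pow_sub_pow_eq]
    refine (norm_sum_le _ _).trans ?_
    have hterm : ∀ k ∈ Finset.range n,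
        ‖(Ahat - Bhat * K) ^ k * ((Ahat - Bhat * K) - (A - B * K)) * (A - B * K) ^ (n - 1 - k)‖
          ≤ 2 * κ ^ 5 * ε * (1 - γ + 2 * κ ^ 3 * ε) ^ (n - 1) := by
      intro k hk
      rw [Finset.mem_range] at hk
      have h3 : ‖(A - B * K) ^ (n - 1 - k)‖
          ≤ κ ^ 2 * (1 - γ + 2 * κ ^ 3 * ε) ^ (n - 1 - k) :=
        (hPow _).trans (mul_le_mul_of_nonneg_left
          (pow_le_pow_left₀ hρ0.le hρρh _) (by positivity))
      calc ‖(Ahat - Bhat * K) ^ k * ((Ahat - Bhat * K) - (A - B * K)) * (A - B * K) ^ (n - 1 - k)‖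
          ≤ ‖(Ahat - Bhat * K) ^ k * ((Ahat - Bhat * K) - (A - B * K))‖
            * ‖(A - B * K) ^ (n - 1 - k)‖ := norm_mul_le _ _
        _ ≤ ‖(Ahat - Bhat * K) ^ k‖ * ‖(Ahat - Bhat * K) - (A - B * K)‖
            * ‖(A - B * K) ^ (n - 1 - k)‖ :=
            mul_le_mul_of_nonneg_right (norm_mul_le _ _) (norm_nonneg _)
        _ ≤ (κ ^ 2 * (1 - γ + 2 * κ ^ 3 * ε) ^ k) * (2 * κ * ε)
            * (κ ^ 2 * (1 - γ + 2 * κ ^ 3 * ε) ^ (n - 1 - k)) :=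
            mul_le_mul (mul_le_mul (hPowh k) hEn (norm_nonneg _) (by positivity)) h3
              (norm_nonneg _) (by positivity)
        _ = 2 * κ ^ 5 * ε
            * ((1 - γ + 2 * κ ^ 3 * ε) ^ k * (1 - γ + 2 * κ ^ 3 * ε) ^ (n - 1 - k)) := by
            ring
        _ = 2 * κ ^ 5 * ε * (1 - γ + 2 * κ ^ 3 * ε) ^ (n - 1) := by
            rw [← pow_add]
            congr 2
            omega
    refine (Finset.sum_le_sum hterm).trans ?_
    rw [Finset.sum_const, Finset.card_range, nsmul_eq_mul]
    apply le_of_eq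
    ring
  -- per-index bound on the difference of transfer matrices
  have hPsiD : ∀ i : ℕ,
      ‖Psi Hn Ahat Bhat K (fun _ => M) t Hn i - Psi Hn A B K (fun _ => M) t Hn i‖
        ≤ (if i ≤ Hn then 2 * κ ^ 5 * ε * i * (1 - γ + 2 * κ ^ 3 * ε) ^ (i - 1) else 0)
          + ∑ j ∈ Finset.range (Hn + 1),
            (if j < i ∧ i - j ≤ Hn then
              (2 * κ ^ 5 * ε * (κ + ε) * (j * (1 - γ + 2 * κ ^ 3 * ε) ^ (j - 1))
                + κ ^ 2 * ε * (1 - γ) ^ j) * (C * (1 - γ) ^ (i - j - 1))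
            else 0) := by
    intro i
    have heq : Psi Hn Ahat Bhat K (fun _ => M) t Hn i - Psi Hn A B K (fun _ => M) t Hn i
        = ((if i ≤ Hn then (Ahat - Bhat * K) ^ i else 0)
            - (if i ≤ Hn then (A - B * K) ^ i else 0))
          + ∑ j ∈ Finset.range (Hn + 1),
            ((if j < i ∧ i - j ≤ Hn then (Ahat - Bhat * K) ^ j * Bhat * M (i - j - 1) else 0)
              - (if j < i ∧ i - j ≤ Hn then (A - B * K) ^ j * B * M (i - j - 1) else 0)) := by
      simp only [Psi]
      rw [Finset.sum_sub_distrib]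
      abel
    rw [heq]
    refine (norm_add_le _ _).trans (add_le_add ?_ ((norm_sum_le _ _).trans
      (Finset.sum_le_sum ?_)))
    · split_ifs with h
      · exact hPd i
      · simp
    · intro j hj
      rw [Finset.mem_range] at hj
      split_ifs with h
      · have hMle : ‖M (i - j - 1)‖ ≤ C * (1 - γ) ^ (i - j - 1) := hM _ (by omega)
        have hBh : ‖Bhat‖ ≤ κ + ε := by
          have hb : Bhat = B - (B - Bhat) := by abel
          rw [hb]
          exact (norm_sub_le _ _).trans (add_le_add hB hBe)
        have hfac : (Ahat - Bhat * K) ^ j * Bhat * M (i - j - 1)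
              - (A - B * K) ^ j * B * M (i - j - 1)
            = (((Ahat - Bhat * K) ^ j - (A - B * K) ^ j) * Bhat
                + (A - B * K) ^ j * (Bhat - B)) * M (i - j - 1) := by
          simp only [Matrix.add_mul, Matrix.sub_mul, Matrix.mul_sub]
          abel
        rw [hfac]
        have h1 : ‖((Ahat - Bhat * K) ^ j - (A - B * K) ^ j) * Bhat
              + (A - B * K) ^ j * (Bhat - B)‖
            ≤ 2 * κ ^ 5 * ε * (κ + ε) * (j * (1 - γ + 2 * κ ^ 3 * ε) ^ (j - 1))
              + κ ^ 2 * ε * (1 - γ) ^ j := by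
          have ha : ‖((Ahat - Bhat * K) ^ j - (A - B * K) ^ j) * Bhat‖
              ≤ (2 * κ ^ 5 * ε * j * (1 - γ + 2 * κ ^ 3 * ε) ^ (j - 1)) * (κ + ε) :=
            (Matrix.l2_opNorm_mul _ _).trans
              (mul_le_mul (hPd j) hBh (norm_nonneg _) (by positivity))
          have hbb : ‖(A - B * K) ^ j * (Bhat - B)‖ ≤ (κ ^ 2 * (1 - γ) ^ j) * ε := by
            refine (Matrix.l2_opNorm_mul _ _).trans
              (mul_le_mul (hPow j) ?_ (norm_nonneg _) (by positivity))
            rw [norm_sub_rev]; exact hBe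
          calc ‖((Ahat - Bhat * K) ^ j - (A - B * K) ^ j) * Bhat
                + (A - B * K) ^ j * (Bhat - B)‖
              ≤ ‖((Ahat - Bhat * K) ^ j - (A - B * K) ^ j) * Bhat‖
                + ‖(A - B * K) ^ j * (Bhat - B)‖ := norm_add_le _ _
            _ ≤ (2 * κ ^ 5 * ε * j * (1 - γ + 2 * κ ^ 3 * ε) ^ (j - 1)) * (κ + ε)
                + (κ ^ 2 * (1 - γ) ^ j) * ε := add_le_add ha hbb
            _ = 2 * κ ^ 5 * ε * (κ + ε) * (j * (1 - γ + 2 * κ ^ 3 * ε) ^ (j - 1))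
                + κ ^ 2 * ε * (1 - γ) ^ j := by ring
        refine (Matrix.l2_opNorm_mul _ _).trans
          (mul_le_mul h1 hMle (norm_nonneg _) ?_)
        have hnn : (0:ℝ) ≤ 2 * κ ^ 5 * ε * (κ + ε)
            * (j * (1 - γ + 2 * κ ^ 3 * ε) ^ (j - 1)) := by positivity
        have hnn2 : (0:ℝ) ≤ κ ^ 2 * ε * (1 - γ) ^ j := by positivity
        linarith
      · simp
  -- per-index bound on the true transfer matrices
  have hPsiN : ∀ i : ℕ, ‖Psi Hn A B K (fun _ => M) t Hn i‖
      ≤ (if i ≤ Hn then κ ^ 2 * (1 - γ) ^ i else 0)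
        + ∑ j ∈ Finset.range (Hn + 1),
          (if j < i ∧ i - j ≤ Hn then κ ^ 3 * C * (1 - γ) ^ (i - 1) else 0) := by
    intro i
    simp only [Psi]
    refine (norm_add_le _ _).trans (add_le_add ?_ ((norm_sum_le _ _).trans
      (Finset.sum_le_sum ?_)))
    · split_ifs with h
      · exact hPow i
      · simp
    · intro j hj
      rw [Finset.mem_range] at hj
      split_ifs with h
      · have hMle : ‖M (i - j - 1)‖ ≤ C * (1 - γ) ^ (i - j - 1) := hM _ (by omega)
        calc ‖(A - B * K) ^ j * B * M (i - j - 1)‖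
            ≤ ‖(A - B * K) ^ j * B‖ * ‖M (i - j - 1)‖ := Matrix.l2_opNorm_mul _ _
          _ ≤ ‖(A - B * K) ^ j‖ * ‖B‖ * ‖M (i - j - 1)‖ :=
              mul_le_mul_of_nonneg_right (Matrix.l2_opNorm_mul _ _) (norm_nonneg _)
          _ ≤ (κ ^ 2 * (1 - γ) ^ j) * κ * (C * (1 - γ) ^ (i - j - 1)) :=
              mul_le_mul (mul_le_mul (hPow j) hB (norm_nonneg _) (by positivity)) hMle
                (norm_nonneg _) (by positivity)
          _ = κ ^ 3 * C * ((1 - γ) ^ j * (1 - γ) ^ (i - j - 1)) := by ring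
          _ = κ ^ 3 * C * (1 - γ) ^ (i - 1) := by
              rw [← pow_add]
              congr 2
              omega
      · simp
  -- main decomposition
  have hmain : ‖ySurr Hn Ahat Bhat K (fun _ => M) what t - ySurr Hn A B K (fun _ => M) w t‖
      ≤ ∑ i ∈ Finset.range (2 * Hn + 1),
        (((if i ≤ Hn then 2 * κ ^ 5 * ε * i * (1 - γ + 2 * κ ^ 3 * ε) ^ (i - 1) else 0)
          + ∑ j ∈ Finset.range (Hn + 1),
            (if j < i ∧ i - j ≤ Hn then
              (2 * κ ^ 5 * ε * (κ + ε) * (j * (1 - γ + 2 * κ ^ 3 * ε) ^ (j - 1))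
                + κ ^ 2 * ε * (1 - γ) ^ j) * (C * (1 - γ) ^ (i - j - 1))
            else 0)) * (W + ζ * ε)
         + ((if i ≤ Hn then κ ^ 2 * (1 - γ) ^ i else 0)
          + ∑ j ∈ Finset.range (Hn + 1),
            (if j < i ∧ i - j ≤ Hn then κ ^ 3 * C * (1 - γ) ^ (i - 1) else 0)) * (ζ * ε)) := by
    simp only [ySurr]
    rw [← Finset.sum_sub_distrib]
    refine (norm_sum_le _ _).trans (Finset.sum_le_sum ?_)
    intro i hi
    rw [Finset.mem_range] at hi
    have hsplit : mulV (Psi Hn Ahat Bhat K (fun _ => M) t Hn i) (what ((t : ℤ) - i))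
          - mulV (Psi Hn A B K (fun _ => M) t Hn i) (w ((t : ℤ) - i))
        = mulV (Psi Hn Ahat Bhat K (fun _ => M) t Hn i - Psi Hn A B K (fun _ => M) t Hn i)
            (what ((t : ℤ) - i))
          + mulV (Psi Hn A B K (fun _ => M) t Hn i) (what ((t : ℤ) - i) - w ((t : ℤ) - i)) := by
      rw [aux_mulV_sub_left, aux_mulV_sub_right]
      abel
    rw [hsplit]
    refine (norm_add_le _ _).trans (add_le_add ?_ ?_)
    · refine (aux_norm_mulV_le _ _).trans
        (mul_le_mul (hPsiD i) (hwhat _ (by omega) (by omega)) (norm_nonneg _)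
          ((norm_nonneg _).trans (hPsiD i)))
    · refine (aux_norm_mulV_le _ _).trans
        (mul_le_mul (hPsiN i) (hdiff _ (by omega) (by omega)) (norm_nonneg _)
          ((norm_nonneg _).trans (hPsiN i)))
  refine hmain.trans ?_
  rw [Finset.sum_add_distrib, ← Finset.sum_mul, ← Finset.sum_mul]
  -- bound the two coefficient sums
  have hSD : ∑ i ∈ Finset.range (2 * Hn + 1),
      ((if i ≤ Hn then 2 * κ ^ 5 * ε * i * (1 - γ + 2 * κ ^ 3 * ε) ^ (i - 1) else 0)
        + ∑ j ∈ Finset.range (Hn + 1),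
          (if j < i ∧ i - j ≤ Hn then
            (2 * κ ^ 5 * ε * (κ + ε) * (j * (1 - γ + 2 * κ ^ 3 * ε) ^ (j - 1))
              + κ ^ 2 * ε * (1 - γ) ^ j) * (C * (1 - γ) ^ (i - j - 1))
          else 0))
      ≤ 2 * κ ^ 5 * ε / (γ - 2 * κ ^ 3 * ε) ^ 2 +
        2 * κ ^ 5 * Hn ^ 2 * C * (κ + ε) * ε /
          ((1 - γ + 2 * κ ^ 3 * ε) * (γ - 2 * κ ^ 3 * ε)) +
        (Hn + 1) * κ ^ 2 * C * ε / ((1 - γ) * γ) := by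
    have hge : (1:ℝ) - (1 - γ + 2 * κ ^ 3 * ε) = γ - 2 * κ ^ 3 * ε := by ring
    have hgg : (1:ℝ) - (1 - γ) = γ := by ring
    rw [Finset.sum_add_distrib]
    have h1 : ∑ i ∈ Finset.range (2 * Hn + 1),
        (if i ≤ Hn then 2 * κ ^ 5 * ε * i * (1 - γ + 2 * κ ^ 3 * ε) ^ (i - 1) else 0)
        ≤ 2 * κ ^ 5 * ε * (((γ - 2 * κ ^ 3 * ε)⁻¹)) ^ 2 := by
      have hterm : ∀ i ∈ Finset.range (2 * Hn + 1),
          (if i ≤ Hn then 2 * κ ^ 5 * ε * i * (1 - γ + 2 * κ ^ 3 * ε) ^ (i - 1) else 0)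
            ≤ 2 * κ ^ 5 * ε * ((i : ℝ) * (1 - γ + 2 * κ ^ 3 * ε) ^ (i - 1)) := by
        intro i _
        split_ifs
        · apply le_of_eq; ring
        · positivity
      refine (Finset.sum_le_sum hterm).trans ?_
      rw [← Finset.mul_sum]
      have hg := aux_sum_mul_geom_le hρh0.le hρh1 (2 * Hn + 1)
      rw [hge] at hg
      exact mul_le_mul_of_nonneg_left hg (by positivity)
    have hsplit : ∀ i ∈ Finset.range (2 * Hn + 1),
        (∑ j ∈ Finset.range (Hn + 1),
          (if j < i ∧ i - j ≤ Hn then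
            (2 * κ ^ 5 * ε * (κ + ε) * (j * (1 - γ + 2 * κ ^ 3 * ε) ^ (j - 1))
              + κ ^ 2 * ε * (1 - γ) ^ j) * (C * (1 - γ) ^ (i - j - 1))
          else 0))
        = (∑ j ∈ Finset.range (Hn + 1),
            (if j < i ∧ i - j ≤ Hn then
              (2 * κ ^ 5 * ε * (κ + ε) * (j * (1 - γ + 2 * κ ^ 3 * ε) ^ (j - 1))) * (C * (1 - γ) ^ (i - j - 1))
            else 0))
          + (∑ j ∈ Finset.range (Hn + 1),
            (if j < i ∧ i - j ≤ Hn then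
              (κ ^ 2 * ε * (1 - γ) ^ j) * (C * (1 - γ) ^ (i - j - 1))
            else 0)) := by
      intro i _
      rw [← Finset.sum_add_distrib]
      refine Finset.sum_congr rfl fun j _ => ?_
      split_ifs
      · ring
      · simp
    rw [Finset.sum_congr rfl hsplit, Finset.sum_add_distrib]
    have hE2 : ∑ i ∈ Finset.range (2 * Hn + 1), ∑ j ∈ Finset.range (Hn + 1),
        (if j < i ∧ i - j ≤ Hn then
          (2 * κ ^ 5 * ε * (κ + ε) * (j * (1 - γ + 2 * κ ^ 3 * ε) ^ (j - 1))) * (C * (1 - γ) ^ (i - j - 1))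
        else 0)
        ≤ ((Hn : ℝ) * (2 * κ ^ 5 * ε * (κ + ε) * C * Hn)) * ((γ - 2 * κ ^ 3 * ε)⁻¹) := by
      have hterm : ∀ i ∈ Finset.range (2 * Hn + 1), ∀ j ∈ Finset.range (Hn + 1),
          (if j < i ∧ i - j ≤ Hn then
            (2 * κ ^ 5 * ε * (κ + ε) * (j * (1 - γ + 2 * κ ^ 3 * ε) ^ (j - 1))) * (C * (1 - γ) ^ (i - j - 1))
          else 0)
          ≤ (if j < i ∧ i - j ≤ Hn then
              (2 * κ ^ 5 * ε * (κ + ε) * C * Hn) * (if 1 ≤ j then (1 - γ + 2 * κ ^ 3 * ε) ^ (j - 1) else 0)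
            else 0) := by
        intro i _ j hj
        rw [Finset.mem_range] at hj
        split_ifs with hc hj1
        · have hjHn : (j : ℝ) ≤ (Hn : ℝ) := by exact_mod_cast (by omega : j ≤ Hn)
          have hpow1 : (1 - γ) ^ (i - j - 1) ≤ 1 := pow_le_one₀ hρ0.le hρ1.le
          calc (2 * κ ^ 5 * ε * (κ + ε) * (j * (1 - γ + 2 * κ ^ 3 * ε) ^ (j - 1))) * (C * (1 - γ) ^ (i - j - 1))
              = (2 * κ ^ 5 * ε * (κ + ε) * C * (1 - γ + 2 * κ ^ 3 * ε) ^ (j - 1))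
                * ((j : ℝ) * (1 - γ) ^ (i - j - 1)) := by ring
            _ ≤ (2 * κ ^ 5 * ε * (κ + ε) * C * (1 - γ + 2 * κ ^ 3 * ε) ^ (j - 1)) * ((Hn : ℝ) * 1) :=
                mul_le_mul_of_nonneg_left
                  (mul_le_mul hjHn hpow1 (by positivity) (by positivity)) (by positivity)
            _ = (2 * κ ^ 5 * ε * (κ + ε) * C * Hn) * (1 - γ + 2 * κ ^ 3 * ε) ^ (j - 1) := by ring
        · have hj0 : j = 0 := by omega
          subst hj0
          norm_num
        · exact le_refl 0
      calc ∑ i ∈ Finset.range (2 * Hn + 1), ∑ j ∈ Finset.range (Hn + 1),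
            (if j < i ∧ i - j ≤ Hn then
              (2 * κ ^ 5 * ε * (κ + ε) * (j * (1 - γ + 2 * κ ^ 3 * ε) ^ (j - 1))) * (C * (1 - γ) ^ (i - j - 1))
            else 0)
          ≤ ∑ i ∈ Finset.range (2 * Hn + 1), ∑ j ∈ Finset.range (Hn + 1),
            (if j < i ∧ i - j ≤ Hn then
              (2 * κ ^ 5 * ε * (κ + ε) * C * Hn) * (if 1 ≤ j then (1 - γ + 2 * κ ^ 3 * ε) ^ (j - 1) else 0)
            else 0) :=
            Finset.sum_le_sum fun i hi => Finset.sum_le_sum (hterm i hi)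
        _ = ∑ j ∈ Finset.range (Hn + 1), ∑ i ∈ Finset.range (2 * Hn + 1),
            (if j < i ∧ i - j ≤ Hn then
              (2 * κ ^ 5 * ε * (κ + ε) * C * Hn) * (if 1 ≤ j then (1 - γ + 2 * κ ^ 3 * ε) ^ (j - 1) else 0)
            else 0) := Finset.sum_comm
        _ ≤ ∑ j ∈ Finset.range (Hn + 1),
            (Hn : ℝ) * ((2 * κ ^ 5 * ε * (κ + ε) * C * Hn) * (if 1 ≤ j then (1 - γ + 2 * κ ^ 3 * ε) ^ (j - 1) else 0)) :=
            Finset.sum_le_sum fun j _ => aux_sum_ite_count_i Hn j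
              (mul_nonneg (by positivity) (by split_ifs <;> positivity))
        _ = ((Hn : ℝ) * (2 * κ ^ 5 * ε * (κ + ε) * C * Hn))
            * ∑ j ∈ Finset.range (Hn + 1), (if 1 ≤ j then (1 - γ + 2 * κ ^ 3 * ε) ^ (j - 1) else 0) := by
            rw [Finset.mul_sum]
            refine Finset.sum_congr rfl fun j _ => ?_
            ring
        _ ≤ ((Hn : ℝ) * (2 * κ ^ 5 * ε * (κ + ε) * C * Hn)) * ((γ - 2 * κ ^ 3 * ε)⁻¹) := by
            have hg := aux_sum_shift_geom_le hρh0.le hρh1 (Hn + 1)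
            rw [hge] at hg
            exact mul_le_mul_of_nonneg_left hg (by positivity)
    have hF2 : ∑ i ∈ Finset.range (2 * Hn + 1), ∑ j ∈ Finset.range (Hn + 1),
        (if j < i ∧ i - j ≤ Hn then
          (κ ^ 2 * ε * (1 - γ) ^ j) * (C * (1 - γ) ^ (i - j - 1))
        else 0)
        ≤ (((Hn : ℝ) + 1) * (κ ^ 2 * ε * C)) * γ⁻¹ := by
      have hterm : ∀ i ∈ Finset.range (2 * Hn + 1), ∀ j ∈ Finset.range (Hn + 1),
          (if j < i ∧ i - j ≤ Hn then
            (κ ^ 2 * ε * (1 - γ) ^ j) * (C * (1 - γ) ^ (i - j - 1))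
          else 0)
          ≤ (if 1 ≤ i then κ ^ 2 * ε * C * (1 - γ) ^ (i - 1) else 0) := by
        intro i _ j _
        split_ifs with hc hi1
        · apply le_of_eq
          calc (κ ^ 2 * ε * (1 - γ) ^ j) * (C * (1 - γ) ^ (i - j - 1))
              = κ ^ 2 * ε * C * ((1 - γ) ^ j * (1 - γ) ^ (i - j - 1)) := by ring
            _ = κ ^ 2 * ε * C * (1 - γ) ^ (i - 1) := by
                rw [← pow_add]
                congr 2
                omega
        · exact absurd (by omega : 1 ≤ i) hi1
        · positivity
        · exact le_refl 0
      calc ∑ i ∈ Finset.range (2 * Hn + 1), ∑ j ∈ Finset.range (Hn + 1),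
            (if j < i ∧ i - j ≤ Hn then
              (κ ^ 2 * ε * (1 - γ) ^ j) * (C * (1 - γ) ^ (i - j - 1))
            else 0)
          ≤ ∑ i ∈ Finset.range (2 * Hn + 1), ∑ _j ∈ Finset.range (Hn + 1),
            (if 1 ≤ i then κ ^ 2 * ε * C * (1 - γ) ^ (i - 1) else 0) :=
            Finset.sum_le_sum fun i hi => Finset.sum_le_sum (hterm i hi)
        _ = (((Hn : ℝ) + 1) * (κ ^ 2 * ε * C))
            * ∑ i ∈ Finset.range (2 * Hn + 1), (if 1 ≤ i then (1 - γ) ^ (i - 1) else 0) := by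
            rw [Finset.mul_sum]
            refine Finset.sum_congr rfl fun i _ => ?_
            rw [Finset.sum_const, Finset.card_range, nsmul_eq_mul]
            push_cast
            split_ifs
            · ring
            · ring
        _ ≤ (((Hn : ℝ) + 1) * (κ ^ 2 * ε * C)) * γ⁻¹ := by
            have hg := aux_sum_shift_geom_le hρ0.le hρ1 (2 * Hn + 1)
            rw [hgg] at hg
            exact mul_le_mul_of_nonneg_left hg (by positivity)
    have q1 : 2 * κ ^ 5 * ε * (((γ - 2 * κ ^ 3 * ε)⁻¹)) ^ 2 = 2 * κ ^ 5 * ε / (γ - 2 * κ ^ 3 * ε) ^ 2 := by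
      rw [inv_pow]
      ring
    have q2 : ((Hn : ℝ) * (2 * κ ^ 5 * ε * (κ + ε) * C * Hn)) * ((γ - 2 * κ ^ 3 * ε)⁻¹)
        ≤ 2 * κ ^ 5 * (Hn : ℝ) ^ 2 * C * (κ + ε) * ε / ((1 - γ + 2 * κ ^ 3 * ε) * (γ - 2 * κ ^ 3 * ε)) := by
      have hl : ((Hn : ℝ) * (2 * κ ^ 5 * ε * (κ + ε) * C * Hn)) * ((γ - 2 * κ ^ 3 * ε)⁻¹)
          = 2 * κ ^ 5 * (Hn : ℝ) ^ 2 * C * (κ + ε) * ε / (γ - 2 * κ ^ 3 * ε) := by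
        rw [div_eq_mul_inv]
        ring
      rw [hl]
      have hden : (1 - γ + 2 * κ ^ 3 * ε) * (γ - 2 * κ ^ 3 * ε) ≤ (γ - 2 * κ ^ 3 * ε) := mul_le_of_le_one_left hγh.le hρh1.le
      have hdenpos : (0:ℝ) < (1 - γ + 2 * κ ^ 3 * ε) * (γ - 2 * κ ^ 3 * ε) := mul_pos hρh0 hγh
      exact div_le_div_of_nonneg_left (by positivity) hdenpos hden
    have q3 : (((Hn : ℝ) + 1) * (κ ^ 2 * ε * C)) * γ⁻¹
        ≤ ((Hn : ℝ) + 1) * κ ^ 2 * C * ε / ((1 - γ) * γ) := by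
      have hl : (((Hn : ℝ) + 1) * (κ ^ 2 * ε * C)) * γ⁻¹
          = ((Hn : ℝ) + 1) * κ ^ 2 * C * ε / γ := by
        rw [div_eq_mul_inv]
        ring
      rw [hl]
      have hden : (1 - γ) * γ ≤ γ := mul_le_of_le_one_left hγ0.le hρ1.le
      have hdenpos : (0:ℝ) < (1 - γ) * γ := mul_pos hρ0 hγ0
      exact div_le_div_of_nonneg_left (by positivity) hdenpos hden
    linarith [h1, hE2, hF2, q2, q3]
  have hSP : ∑ i ∈ Finset.range (2 * Hn + 1),
      ((if i ≤ Hn then κ ^ 2 * (1 - γ) ^ i else 0)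
        + ∑ j ∈ Finset.range (Hn + 1),
          (if j < i ∧ i - j ≤ Hn then κ ^ 3 * C * (1 - γ) ^ (i - 1) else 0))
      ≤ (κ ^ 2 + Hn * κ ^ 3 * C) / γ := by
    have hgg : (1:ℝ) - (1 - γ) = γ := by ring
    rw [Finset.sum_add_distrib]
    have h1 : ∑ i ∈ Finset.range (2 * Hn + 1), (if i ≤ Hn then κ ^ 2 * (1 - γ) ^ i else 0)
        ≤ κ ^ 2 * γ⁻¹ := by
      have hterm : ∀ i ∈ Finset.range (2 * Hn + 1),
          (if i ≤ Hn then κ ^ 2 * (1 - γ) ^ i else 0) ≤ κ ^ 2 * (1 - γ) ^ i := by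
        intro i _
        split_ifs
        · exact le_refl _
        · positivity
      refine (Finset.sum_le_sum hterm).trans ?_
      rw [← Finset.mul_sum]
      have hg := aux_geom_sum_le_inv hρ0.le hρ1 (2 * Hn + 1)
      rw [hgg] at hg
      exact mul_le_mul_of_nonneg_left hg (by positivity)
    have h2 : ∑ i ∈ Finset.range (2 * Hn + 1), ∑ j ∈ Finset.range (Hn + 1),
        (if j < i ∧ i - j ≤ Hn then κ ^ 3 * C * (1 - γ) ^ (i - 1) else 0)
        ≤ ((Hn : ℝ) * (κ ^ 3 * C)) * γ⁻¹ := by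
      have hterm : ∀ i ∈ Finset.range (2 * Hn + 1),
          (∑ j ∈ Finset.range (Hn + 1),
            (if j < i ∧ i - j ≤ Hn then κ ^ 3 * C * (1 - γ) ^ (i - 1) else 0))
          ≤ ((Hn : ℝ) * (κ ^ 3 * C)) * (if 1 ≤ i then (1 - γ) ^ (i - 1) else 0) := by
        intro i _
        refine (aux_sum_ite_count_j Hn i (by positivity)).trans ?_
        split_ifs
        · apply le_of_eq; ring
        · simp
      refine (Finset.sum_le_sum hterm).trans ?_
      rw [← Finset.mul_sum]
      have hg := aux_sum_shift_geom_le hρ0.le hρ1 (2 * Hn + 1)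
      rw [hgg] at hg
      exact mul_le_mul_of_nonneg_left hg (by positivity)
    have hfin : κ ^ 2 * γ⁻¹ + ((Hn : ℝ) * (κ ^ 3 * C)) * γ⁻¹
        = (κ ^ 2 + (Hn : ℝ) * κ ^ 3 * C) / γ := by
      rw [div_eq_mul_inv]
      ring
    linarith [h1, h2]
  exact add_le_add (mul_le_mul_of_nonneg_right hSD hWζ)
    (mul_le_mul_of_nonneg_right hSP hζε)
end
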